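/- arXiv:2405.20976 — 5 statements merged into one kernel-verified Lean document; each statement's English description precedes it below -/
import Mathlib

section
/- Let M be an integral preference matrix. Then the rationality number of M equals the dichromatic number of its voting graph: α(M) = χ⃗(D_M). -/
open scoped Classical

/-- A voter: a strict partial order on the set `C` of candidates. -/
structure Voter (C : Type) where
  rel : C → C → Prop
  irrefl : ∀ i, ¬ rel i i
  trans : ∀ {i j k}, rel i j → rel j k → rel i k

namespace Voter

variable {C : Type}

/-- The voter strongly prefers `i` over `j`. -/
def strong (v : Voter C) (i j : C) : Prop := v.rel i j

/-- The voter weakly prefers `i` over `j`: strongly prefers, or is indifferent. -/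
def weak (v : Voter C) (i j : C) : Prop := v.rel i j ∨ (¬ v.rel i j ∧ ¬ v.rel j i)

/-- A finite antichain of the voter's partial order. -/
def IsAntichainOf (v : Voter C) (A : Finset C) : Prop :=
  ∀ i ∈ A, ∀ j ∈ A, i ≠ j → ¬ v.rel i j ∧ ¬ v.rel j i

/-- A voter is `α`-rational if every antichain of its partial order has size at most `α`. -/
def Rational (v : Voter C) (α : ℕ) : Prop :=
  ∀ A : Finset C, v.IsAntichainOf A → A.card ≤ α

end Voter

/-- Number of voters in the list `V` satisfying the predicate `P`. -/
noncomputable def countVoters {C : Type} (V : List (Voter C)) (P : Voter C → Prop) : ℕ :=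
  (V.map fun v => if P v then 1 else 0).sum

/-- A (finite, nonempty) list of voters is consistent with the matrix `M` if the
rationality constraints hold for every ordered pair of distinct candidates. -/
def Consistent {C : Type} (M : C → C → ℝ) (V : List (Voter C)) : Prop :=
  V ≠ [] ∧ ∀ i j : C, i ≠ j →
    (countVoters V (fun v => v.strong i j) : ℝ) / (V.length : ℝ) ≤ M i j ∧
      M i j ≤ (countVoters V (fun v => v.weak i j) : ℝ) / (V.length : ℝ)

/-- `M` is a preference matrix. -/
def IsPrefMatrix {C : Type} (M : C → C → ℝ) : Prop :=
  (∀ i, M i i = 0) ∧ (∀ i j, 0 ≤ M i j) ∧ (∀ i j : C, i ≠ j → M i j + M j i = 1)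

/-- `M` is half-integral. -/
def HalfIntegral {C : Type} (M : C → C → ℝ) : Prop :=
  ∀ i j, M i j = 0 ∨ M i j = 1 / 2 ∨ M i j = 1

/-- `M` is integral. -/
def Integral {C : Type} (M : C → C → ℝ) : Prop :=
  ∀ i j, M i j = 0 ∨ M i j = 1

/-- `M` is `α`-rationalizable: some finite nonempty list of `α`-rational voters is
consistent with `M`. -/
def Rationalizable {C : Type} (M : C → C → ℝ) (α : ℕ) : Prop :=
  ∃ V : List (Voter C), Consistent M V ∧ ∀ v ∈ V, v.Rational α

/-- The rationality number of `M`: the least `α` such that `M` is `α`-rationalizable. -/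
noncomputable def rationalityNumber {C : Type} (M : C → C → ℝ) : ℕ :=
  sInf {α | Rationalizable M α}

/-- The unanimity graph of `M`: an edge between `i` and `j` iff `p i j = 1` or `p j i = 1`. -/
def unanimityGraph {C : Type} (M : C → C → ℝ) : SimpleGraph C where
  Adj i j := i ≠ j ∧ (M i j = 1 ∨ M j i = 1)
  symm := by
    constructor
    intro i j h
    exact ⟨h.1.symm, h.2.symm⟩
  loopless := by
    constructor
    intro i h
    exact h.1 rfl

/-- The voting graph of `M`, as a relation: an arc from `i` to `j` iff `p i j = 1`. -/
def votingRel {C : Type} (M : C → C → ℝ) : C → C → Prop := fun i j => M i j = 1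

/-- The relation `r` is acyclic on the set `S`: no directed cycle inside `S`. -/
def AcyclicOn {C : Type} (r : C → C → Prop) (S : Set C) : Prop :=
  ∀ x, ¬ Relation.TransGen (fun a b => a ∈ S ∧ b ∈ S ∧ r a b) x x

/-- The dichromatic number of the digraph given by the relation `r`: the minimum number of
parts in a partition of the vertices into sets each inducing an acyclic subdigraph. -/
noncomputable def dichromaticNumber {C : Type} (r : C → C → Prop) : ℕ :=
  sInf {k | ∃ c : C → Fin k, ∀ m : Fin k, AcyclicOn r {x | c x = m}}

/-- `r` is a tournament: irreflexive with exactly one arc between distinct vertices. -/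
def IsTournament {C : Type} (r : C → C → Prop) : Prop :=
  (∀ i, ¬ r i i) ∧ ∀ i j : C, i ≠ j → (r i j ↔ ¬ r j i)

/-- The voter's partial order partitions the candidates into at most `α` disjoint chains:
two distinct candidates are comparable iff they lie in the same chain. -/
def ChainPartition {C : Type} (v : Voter C) (α : ℕ) : Prop :=
  ∃ c : C → ℕ, (∀ i, c i < α) ∧
    ∀ i j : C, i ≠ j → ((v.rel i j ∨ v.rel j i) ↔ c i = c j)


section Dilworth

variable {C : Type}

theorem Voter.asymm (v : Voter C) {i j : C} (h : v.rel i j) : ¬ v.rel j i :=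
  fun h' => v.irrefl i (v.trans h h')

/-- Max size of an antichain inside `S`. -/
noncomputable def vwidth (v : Voter C) (S : Finset C) : ℕ :=
  (S.powerset.filter (fun A => v.IsAntichainOf A)).sup Finset.card

theorem le_vwidth {v : Voter C} {A S : Finset C} (hAS : A ⊆ S) (hA : v.IsAntichainOf A) :
    A.card ≤ vwidth v S :=
  Finset.le_sup (by simp [Finset.mem_filter, Finset.mem_powerset, hAS, hA])

theorem exists_vwidth (v : Voter C) (S : Finset C) :
    ∃ A, A ⊆ S ∧ v.IsAntichainOf A ∧ A.card = vwidth v S := by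
  have hne : (S.powerset.filter (fun A => v.IsAntichainOf A)).Nonempty := by
    refine ⟨∅, ?_⟩
    exact Finset.mem_filter.mpr ⟨Finset.empty_mem_powerset S, by simp [Voter.IsAntichainOf]⟩
  obtain ⟨A, hA, hcard⟩ := Finset.exists_mem_eq_sup _ hne Finset.card
  rw [Finset.mem_filter, Finset.mem_powerset] at hA
  exact ⟨A, hA.1, hA.2, hcard.symm⟩

theorem vwidth_mono {v : Voter C} {S T : Finset C} (h : S ⊆ T) : vwidth v S ≤ vwidth v T := by
  refine Finset.sup_le fun A hA => ?_
  rw [Finset.mem_filter, Finset.mem_powerset] at hA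
  exact le_vwidth (hA.1.trans h) hA.2

theorem exists_maximal (v : Voter C) (S : Finset C) (hS : S.Nonempty) :
    ∃ a ∈ S, ∀ b ∈ S, ¬ v.rel a b := by
  obtain ⟨a, ha, hmin⟩ := Finset.exists_min_image S (fun a => (S.filter (v.rel a)).card) hS
  refine ⟨a, ha, fun b hb hab => ?_⟩
  have hsub : S.filter (v.rel b) ⊂ S.filter (v.rel a) := by
    constructor
    · intro x hx
      rw [Finset.mem_filter] at hx ⊢
      exact ⟨hx.1, v.trans hab hx.2⟩
    · intro hsub'
      have : b ∈ S.filter (v.rel b) := hsub' (by rw [Finset.mem_filter]; exact ⟨hb, hab⟩)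
      rw [Finset.mem_filter] at this
      exact v.irrefl b this.2
  exact absurd (hmin b hb) (by simpa using Finset.card_lt_card hsub)

theorem exists_top (v : Voter C) (S : Finset C) (hS : S.Nonempty)
    (hchain : ∀ x ∈ S, ∀ y ∈ S, x ≠ y → v.rel x y ∨ v.rel y x) :
    ∃ t ∈ S, ∀ x ∈ S, x ≠ t → v.rel x t := by
  obtain ⟨t, ht, hmax⟩ := exists_maximal v S hS
  refine ⟨t, ht, fun x hx hxt => ?_⟩
  rcases hchain t ht x hx (Ne.symm hxt) with h | h
  · exact absurd h (hmax x hx)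
  · exact h

/-- Dilworth's theorem: `S` can be partitioned into `vwidth v S` chains. -/
theorem dilworth (v : Voter C) (S : Finset C) :
    ∃ c : C → ℕ, (∀ x ∈ S, c x < vwidth v S) ∧
      ∀ x ∈ S, ∀ y ∈ S, x ≠ y → c x = c y → (v.rel x y ∨ v.rel y x) := by
  induction S using Finset.strongInduction with
  | _ S IH =>
  rcases S.eq_empty_or_nonempty with rfl | hS
  · exact ⟨fun _ => 0, by simp, by simp⟩
  obtain ⟨a, haS, hamax⟩ := exists_maximal v S hS
  set S' := S.erase a with hS'
  have hS'sub : S' ⊆ S := Finset.erase_subset _ _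
  have hS'ssub : S' ⊂ S := Finset.erase_ssubset haS
  obtain ⟨c', hc'lt, hc'chain⟩ := IH S' hS'ssub
  set k := vwidth v S' with hk
  by_cases hk0 : k = 0
  · -- S' is empty, S = {a}
    have hS'empty : ∀ x, x ∉ S' := by
      intro x hx
      have hanti : v.IsAntichainOf {x} := by
        intro i hi j hj hij
        simp only [Finset.mem_singleton] at hi hj
        subst hi; subst hj
        exact absurd rfl hij
      have h1 : ({x} : Finset C).card ≤ k := le_vwidth (by simpa using hx) hanti
      simp [hk0] at h1
    have hSa : ∀ x ∈ S, x = a := by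
      intro x hx
      by_contra hxa
      exact hS'empty x (Finset.mem_erase.mpr ⟨hxa, hx⟩)
    have hanti : v.IsAntichainOf {a} := by
      intro i hi j hj hij
      simp only [Finset.mem_singleton] at hi hj
      subst hi; subst hj
      exact absurd rfl hij
    have hw : 1 ≤ vwidth v S := by
      have := le_vwidth (v := v) (A := {a}) (S := S) (by simpa using haS) hanti
      simpa using this
    refine ⟨fun _ => 0, fun x hx => hw, fun x hx y hy hxy _ => ?_⟩
    exact absurd ((hSa x hx).trans (hSa y hy).symm) hxy
  · have hk1 : 1 ≤ k := Nat.one_le_iff_ne_zero.mpr hk0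
    -- every antichain of S' of size k meets every color class i < k
    have hmeet : ∀ A : Finset C, A ⊆ S' → v.IsAntichainOf A → A.card = k →
        ∀ i, i < k → ∃ x ∈ A, c' x = i := by
      intro A hAS hA hAcard i hi
      by_contra hno
      push_neg at hno
      have hinj : Set.InjOn c' A := by
        intro x hx y hy hxy
        by_contra hne
        rcases hc'chain x (hAS hx) y (hAS hy) hne hxy with h | h
        · exact (hA x hx y hy hne).1 h
        · exact (hA x hx y hy hne).2 h
      have hmaps : ∀ x ∈ A, c' x ∈ (Finset.range k).erase i := by
        intro x hx
        exact Finset.mem_erase.mpr ⟨hno x hx, Finset.mem_range.mpr (hc'lt x (hAS hx))⟩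
      have := Finset.card_le_card_of_injOn c' hmaps hinj
      rw [hAcard, Finset.card_erase_of_mem (Finset.mem_range.mpr hi), Finset.card_range] at this
      omega
    obtain ⟨W, hWS, hWanti, hWcard⟩ := exists_vwidth v S'
    -- B i : elements of color i lying in some k-antichain
    set B : ℕ → Finset C := fun i => S'.filter (fun x => c' x = i ∧
      ∃ A, A ⊆ S' ∧ v.IsAntichainOf A ∧ A.card = k ∧ x ∈ A) with hB
    have hBne : ∀ i, i < k → (B i).Nonempty := by
      intro i hi
      obtain ⟨x, hxW, hxc⟩ := hmeet W hWS hWanti hWcard i hi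
      exact ⟨x, by rw [hB]; simp only [Finset.mem_filter]
                   exact ⟨hWS hxW, hxc, W, hWS, hWanti, hWcard, hxW⟩⟩
    have hBchain : ∀ i, ∀ x ∈ B i, ∀ y ∈ B i, x ≠ y → v.rel x y ∨ v.rel y x := by
      intro i x hx y hy hxy
      rw [hB, Finset.mem_filter] at hx hy
      exact hc'chain x hx.1 y hy.1 hxy (hx.2.1.trans hy.2.1.symm)
    have hC : Nonempty C := ⟨a⟩
    have htops : ∀ i : ℕ, ∃ t, i < k → t ∈ B i ∧ ∀ x ∈ B i, x ≠ t → v.rel x t := by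
      intro i
      by_cases hi : i < k
      · obtain ⟨t, ht, htop⟩ := exists_top v (B i) (hBne i hi) (hBchain i)
        exact ⟨t, fun _ => ⟨ht, htop⟩⟩
      · exact ⟨a, fun h => absurd h hi⟩
    choose t ht using htops
    have htmem : ∀ i, i < k → t i ∈ S' ∧ c' (t i) = i := by
      intro i hi
      have := (ht i hi).1
      rw [hB, Finset.mem_filter] at this
      exact ⟨this.1, this.2.1⟩
    -- every k-antichain's color-i element is ≤ t i
    have hbelow : ∀ A, A ⊆ S' → v.IsAntichainOf A → A.card = k → ∀ i, i < k →
        ∃ x ∈ A, c' x = i ∧ (x = t i ∨ v.rel x (t i)) := by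
      intro A hAS hA hAcard i hi
      obtain ⟨x, hxA, hxc⟩ := hmeet A hAS hA hAcard i hi
      have hxB : x ∈ B i := by
        rw [hB, Finset.mem_filter]
        exact ⟨hAS hxA, hxc, A, hAS, hA, hAcard, hxA⟩
      refine ⟨x, hxA, hxc, ?_⟩
      by_cases hxt : x = t i
      · exact Or.inl hxt
      · exact Or.inr ((ht i hi).2 x hxB hxt)
    -- the t i's form an antichain
    have htanti : ∀ i, i < k → ∀ j, j < k → i ≠ j → ¬ v.rel (t i) (t j) := by
      intro i hi j hj hij hrel
      obtain ⟨tjS', tjc⟩ := htmem j hj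
      have htjB := (ht j hj).1
      rw [hB, Finset.mem_filter] at htjB
      obtain ⟨_, _, A, hAS, hA, hAcard, htjA⟩ := htjB
      obtain ⟨x, hxA, hxc, hxle⟩ := hbelow A hAS hA hAcard i hi
      have hxtj : x ≠ t j := by
        intro h
        apply hij
        rw [← hxc, h, tjc]
      rcases hxle with rfl | hxlt
      · exact (hA _ hxA _ htjA hxtj).1 hrel
      · exact (hA _ hxA _ htjA hxtj).1 (v.trans hxlt hrel)
    have htne : ∀ i, i < k → ∀ j, j < k → i ≠ j → t i ≠ t j := by
      intro i hi j hj hij h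
      exact hij (((htmem i hi).2.symm.trans (by rw [h, (htmem j hj).2])))
    by_cases hcase : ∃ i, i < k ∧ v.rel (t i) a
    · -- Case A: remove chain K = {x ≤ t i in B i} ∪ {a}
      obtain ⟨i, hi, hrel⟩ := hcase
      set D := (B i).filter (fun x => x = t i ∨ v.rel x (t i)) with hD
      set K := insert a D with hK
      have hDS' : D ⊆ S' := by
        intro x hx
        rw [hD, Finset.mem_filter, hB, Finset.mem_filter] at hx
        exact hx.1.1
      have hKS : K ⊆ S := by
        rw [hK]
        intro x hx
        rcases Finset.mem_insert.mp hx with rfl | hx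
        · exact haS
        · exact hS'sub (hDS' hx)
      set R := S \ K with hR
      have haK : a ∈ K := Finset.mem_insert_self _ _
      have hRss : R ⊂ S := by
        rw [hR]
        refine Finset.ssubset_iff_of_subset (Finset.sdiff_subset) |>.mpr ?_
        exact ⟨a, haS, by simp [haK]⟩
      obtain ⟨cR, hcRlt, hcRchain⟩ := IH R hRss
      have hRS' : R ⊆ S' := by
        intro x hx
        rw [hR, Finset.mem_sdiff] at hx
        refine Finset.mem_erase.mpr ⟨?_, hx.1⟩
        intro h; exact hx.2 (h ▸ haK)
      have hwR : vwidth v R < k := by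
        rcases Nat.lt_or_ge (vwidth v R) k with h | h
        · exact h
        · exfalso
          obtain ⟨A, hAR, hA, hAcard⟩ := exists_vwidth v R
          have hAk : k ≤ A.card := hAcard ▸ h
          -- shrink A to size exactly k? width R ≤ width S' = k so A.card ≤ k
          have hAk' : A.card ≤ k := hAcard ▸ (vwidth_mono hRS')
          have hAcard' : A.card = k := le_antisymm hAk' hAk
          obtain ⟨x, hxA, hxc, hxle⟩ := hbelow A (hAR.trans hRS') hA hAcard' i hi
          have hxB : x ∈ B i := by
            rw [hB, Finset.mem_filter]
            exact ⟨(hAR.trans hRS') hxA, hxc, A, hAR.trans hRS', hA, hAcard', hxA⟩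
          have hxK : x ∈ K := by
            rw [hK]
            exact Finset.mem_insert_of_mem (by rw [hD, Finset.mem_filter]; exact ⟨hxB, hxle⟩)
          have := hAR hxA
          rw [hR, Finset.mem_sdiff] at this
          exact this.2 hxK
      have hkS : k ≤ vwidth v S := vwidth_mono hS'sub
      refine ⟨fun x => if x ∈ K then k - 1 else cR x, ?_, ?_⟩
      · intro x hx
        by_cases hxK : x ∈ K <;> simp only [hxK, if_true, if_false]
        · omega
        · have : x ∈ R := by rw [hR, Finset.mem_sdiff]; exact ⟨hx, hxK⟩
          have := hcRlt x this
          omega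
      · intro x hx y hy hxy hcxy
        by_cases hxK : x ∈ K <;> by_cases hyK : y ∈ K
        · -- both in K: chain
          rw [hK] at hxK hyK
          rcases Finset.mem_insert.mp hxK with rfl | hxD
          · rcases Finset.mem_insert.mp hyK with rfl | hyD
            · exact absurd rfl hxy
            · right
              rw [hD, Finset.mem_filter] at hyD
              rcases hyD.2 with rfl | h
              · exact hrel
              · exact v.trans h hrel
          · rcases Finset.mem_insert.mp hyK with rfl | hyD
            · left
              rw [hD, Finset.mem_filter] at hxD
              rcases hxD.2 with rfl | h
              · exact hrel
              · exact v.trans h hrel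
            · rw [hD, Finset.mem_filter] at hxD hyD
              exact hBchain i x hxD.1 y hyD.1 hxy
        · exfalso
          simp only [hxK, hyK, if_true, if_false] at hcxy
          have hyR : y ∈ R := by rw [hR, Finset.mem_sdiff]; exact ⟨hy, hyK⟩
          have := hcRlt y hyR
          omega
        · exfalso
          simp only [hxK, hyK, if_true, if_false] at hcxy
          have hxR : x ∈ R := by rw [hR, Finset.mem_sdiff]; exact ⟨hx, hxK⟩
          have := hcRlt x hxR
          omega
        · simp only [hxK, hyK, if_false] at hcxy
          have hxR : x ∈ R := by rw [hR, Finset.mem_sdiff]; exact ⟨hx, hxK⟩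
          have hyR : y ∈ R := by rw [hR, Finset.mem_sdiff]; exact ⟨hy, hyK⟩
          exact hcRchain x hxR y hyR hxy hcxy
    · -- Case B: {a} ∪ {t i} is a (k+1)-antichain
      push_neg at hcase
      set T := insert a ((Finset.range k).image t) with hT
      have htS' : ∀ i, i < k → t i ∈ S' := fun i hi => (htmem i hi).1
      have haT : a ∉ (Finset.range k).image t := by
        intro h
        obtain ⟨i, hi, hti⟩ := Finset.mem_image.mp h
        rw [Finset.mem_range] at hi
        have := htS' i hi
        rw [hti] at this
        exact (Finset.mem_erase.mp this).1 rfl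
      have hTcard : T.card = k + 1 := by
        rw [hT, Finset.card_insert_of_notMem haT, Finset.card_image_of_injOn, Finset.card_range]
        intro i hi j hj hij
        by_contra h
        exact htne i (Finset.mem_range.mp hi) j (Finset.mem_range.mp hj) h hij
      have hTanti : v.IsAntichainOf T := by
        intro x hx y hy hxy
        rw [hT] at hx hy
        rcases Finset.mem_insert.mp hx with rfl | hx
        · rcases Finset.mem_insert.mp hy with rfl | hy
          · exact absurd rfl hxy
          · obtain ⟨j, hj, rfl⟩ := Finset.mem_image.mp hy
            rw [Finset.mem_range] at hj
            exact ⟨hamax _ (hS'sub (htS' j hj)), hcase j hj⟩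
        · obtain ⟨i, hi, rfl⟩ := Finset.mem_image.mp hx
          rw [Finset.mem_range] at hi
          rcases Finset.mem_insert.mp hy with rfl | hy
          · exact ⟨hcase i hi, hamax _ (hS'sub (htS' i hi))⟩
          · obtain ⟨j, hj, rfl⟩ := Finset.mem_image.mp hy
            rw [Finset.mem_range] at hj
            have hij : i ≠ j := by
              intro h; exact hxy (by rw [h])
            exact ⟨htanti i hi j hj hij, htanti j hj i hi (Ne.symm hij)⟩
      have hTS : T ⊆ S := by
        rw [hT]
        intro x hx
        rcases Finset.mem_insert.mp hx with rfl | hx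
        · exact haS
        · obtain ⟨i, hi, rfl⟩ := Finset.mem_image.mp hx
          rw [Finset.mem_range] at hi
          exact hS'sub (htS' i hi)
      have hwS : k + 1 ≤ vwidth v S := hTcard ▸ le_vwidth hTS hTanti
      refine ⟨fun x => if x = a then k else c' x, ?_, ?_⟩
      · intro x hx
        by_cases hxa : x = a <;> simp only [hxa, if_true, if_false]
        · omega
        · have : x ∈ S' := Finset.mem_erase.mpr ⟨hxa, hx⟩
          have := hc'lt x this
          omega
      · intro x hx y hy hxy hcxy
        by_cases hxa : x = a <;> by_cases hya : y = a
        · exact absurd (hxa.trans hya.symm) hxy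
        · exfalso
          simp only [hxa, hya, if_true, if_false] at hcxy
          have : y ∈ S' := Finset.mem_erase.mpr ⟨hya, hy⟩
          have := hc'lt y this
          omega
        · exfalso
          simp only [hxa, hya, if_true, if_false] at hcxy
          have : x ∈ S' := Finset.mem_erase.mpr ⟨hxa, hx⟩
          have := hc'lt x this
          omega
        · simp only [hxa, hya, if_false] at hcxy
          exact hc'chain x (Finset.mem_erase.mpr ⟨hxa, hx⟩) y (Finset.mem_erase.mpr ⟨hya, hy⟩) hxy hcxy

end Dilworth
section Main

variable {C : Type}

theorem countVoters_le (V : List (Voter C)) (P : Voter C → Prop) :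
    countVoters V P ≤ V.length := by
  induction V with
  | nil => simp [countVoters]
  | cons v V ih =>
    have h : countVoters (v :: V) P = (if P v then 1 else 0) + countVoters V P := by
      simp [countVoters]
    rw [h, List.length_cons]
    by_cases hv : P v <;> simp [hv] <;> omega

theorem countVoters_all (V : List (Voter C)) (P : Voter C → Prop)
    (h : V.length ≤ countVoters V P) : ∀ v ∈ V, P v := by
  induction V with
  | nil => simp
  | cons v V ih =>
    have hc : countVoters (v :: V) P = (if P v then 1 else 0) + countVoters V P := by
      simp [countVoters]
    have hle := countVoters_le V P
    rw [hc, List.length_cons] at h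
    by_cases hv : P v
    · rw [if_pos hv] at h
      intro w hw
      rcases List.mem_cons.mp hw with rfl | hw
      · exact hv
      · exact ih (by omega) w hw
    · rw [if_neg hv] at h
      omega

theorem consistent_not_rel {M : C → C → ℝ} {V : List (Voter C)} (hcon : Consistent M V)
    {i j : C} (hij : i ≠ j) (h1 : M i j = 1) : ∀ v ∈ V, ¬ v.rel j i := by
  obtain ⟨hne, hcon⟩ := hcon
  have hlen : 0 < V.length := List.length_pos_iff.mpr hne
  have h2 := (hcon i j hij).2
  rw [h1] at h2
  have hlenR : (0 : ℝ) < (V.length : ℝ) := by exact_mod_cast hlen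
  have hcount : (V.length : ℝ) ≤ (countVoters V (fun v => v.weak i j) : ℝ) :=
    (one_le_div hlenR).mp h2
  have hcountN : V.length ≤ countVoters V (fun v => v.weak i j) := by exact_mod_cast hcount
  intro v hv hrel
  have hweak := countVoters_all V _ hcountN v hv
  rcases hweak with h | h
  · exact v.asymm h hrel
  · exact h.2 hrel

theorem integral_cases {M : C → C → ℝ} (hM : IsPrefMatrix M) (hInt : Integral M)
    {i j : C} (hij : i ≠ j) : (M i j = 1 ∧ M j i = 0) ∨ (M i j = 0 ∧ M j i = 1) := by
  have hsum := hM.2.2 i j hij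
  rcases hInt i j with h | h
  · right; exact ⟨h, by linarith⟩
  · left; exact ⟨h, by linarith⟩

/-- From a rationalization, obtain a dichromatic coloring. -/
theorem color_of_rat [Fintype C] {M : C → C → ℝ} (hM : IsPrefMatrix M)
    (hInt : Integral M) {α : ℕ} (h : Rationalizable M α) :
    ∃ c : C → Fin α, ∀ m : Fin α, AcyclicOn (votingRel M) {x | c x = m} := by
  obtain ⟨V, hcon, hrat⟩ := h
  obtain ⟨v, hv⟩ : ∃ v, v ∈ V := List.exists_mem_of_ne_nil V hcon.1
  have hvrat := hrat v hv
  obtain ⟨c, hclt, hchain⟩ := dilworth v Finset.univ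
  have hwle : vwidth v Finset.univ ≤ α := by
    refine Finset.sup_le fun A hA => ?_
    rw [Finset.mem_filter] at hA
    exact hvrat A hA.2
  have hlt : ∀ x : C, c x < α := fun x => lt_of_lt_of_le (hclt x (Finset.mem_univ x)) hwle
  refine ⟨fun x => ⟨c x, hlt x⟩, fun m x hx => ?_⟩
  have hmono : ∀ a b : C,
      (a ∈ {x : C | (⟨c x, hlt x⟩ : Fin α) = m} ∧
       b ∈ {x : C | (⟨c x, hlt x⟩ : Fin α) = m} ∧ votingRel M a b) → v.rel a b := by
    rintro a b ⟨ha, hb, hab⟩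
    have hab1 : M a b = 1 := hab
    have hne : a ≠ b := by
      rintro rfl
      rw [hM.1 a] at hab1
      norm_num at hab1
    have hcab : c a = c b := by
      have := ha.trans hb.symm
      exact congrArg Fin.val this
    rcases hchain a (Finset.mem_univ a) b (Finset.mem_univ b) hne hcab with h | h
    · exact h
    · exact absurd h (consistent_not_rel hcon hne hab1 v hv)
  have htg : Relation.TransGen v.rel x x := Relation.TransGen.mono hmono _ _ hx
  have hself : ∀ a b : C, Relation.TransGen v.rel a b → v.rel a b := by
    intro a b h
    induction h with
    | single h => exact h
    | tail _ h ih => exact v.trans ih h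
  exact v.irrefl x (hself x x htg)

/-- From a dichromatic coloring, obtain a rationalization by a single voter. -/
theorem rat_of_color {M : C → C → ℝ} (hM : IsPrefMatrix M) (hInt : Integral M)
    {k : ℕ} (c : C → Fin k) (hc : ∀ m : Fin k, AcyclicOn (votingRel M) {x | c x = m}) :
    Rationalizable M k := by
  classical
  set s : C → C → Prop := fun a b => c a = c b ∧ M a b = 1 with hs
  have hcol : ∀ a b : C, Relation.TransGen s a b → c a = c b := by
    intro a b h
    induction h with
    | single h => exact h.1
    | tail _ h ih => exact ih.trans h.1
  have hstep : ∀ (m : Fin k) (a b : C), Relation.TransGen s a b → c b = m →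
      Relation.TransGen (fun p q => p ∈ {x : C | c x = m} ∧ q ∈ {x : C | c x = m} ∧
        votingRel M p q) a b := by
    intro m a b h
    induction h with
    | single h =>
      intro hb
      exact Relation.TransGen.single ⟨h.1.trans hb, hb, h.2⟩
    | @tail b' b hab' hb'b ih =>
      intro hb
      have hb' : c b' = m := hb'b.1.trans hb
      exact (ih hb').tail ⟨hb', hb, hb'b.2⟩
  have pirrefl : ∀ x : C, ¬ Relation.TransGen s x x := by
    intro x hx
    exact hc (c x) x (hstep (c x) x x hx rfl)
  set v : Voter C := ⟨fun a b => Relation.TransGen s a b, pirrefl,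
    fun h h' => Relation.TransGen.trans h h'⟩ with hvdef
  have hvrel : ∀ a b : C, v.rel a b ↔ Relation.TransGen s a b := fun a b => Iff.rfl
  have hrat : v.Rational k := by
    intro A hA
    have hcard : A.card ≤ (Finset.univ : Finset (Fin k)).card := by
      refine Finset.card_le_card_of_injOn c (fun _ _ => Finset.mem_univ _) ?_
      intro x hx y hy hxy
      by_contra hne
      have hxA := Finset.mem_coe.mp hx
      have hyA := Finset.mem_coe.mp hy
      rcases integral_cases hM hInt hne with ⟨h1, _⟩ | ⟨_, h1⟩
      · exact (hA x hxA y hyA hne).1 (Relation.TransGen.single ⟨hxy, h1⟩)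
      · exact (hA x hxA y hyA hne).2 (Relation.TransGen.single ⟨hxy.symm, h1⟩)
    simpa using hcard
  refine ⟨[v], ⟨by simp, ?_⟩, ?_⟩
  · intro i j hij
    have hcnt : ∀ P : Voter C → Prop, countVoters [v] P = if P v then 1 else 0 := by
      intro P; simp [countVoters]
    have hlen : ([v] : List (Voter C)).length = 1 := rfl
    rcases integral_cases hM hInt hij with ⟨h1, h0⟩ | ⟨h0, h1⟩
    · constructor
      · rw [hcnt, hlen, h1]
        by_cases hstrong : v.strong i j <;> simp [hstrong]
      · -- show weak i j holds
        have hnrel : ¬ v.rel j i := by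
          intro hrel
          have hcji : c j = c i := hcol j i hrel
          exact pirrefl j (hrel.tail ⟨hcji.symm, h1⟩)
        have hweak : v.weak i j := by
          by_cases hrel : v.rel i j
          · exact Or.inl hrel
          · exact Or.inr ⟨hrel, hnrel⟩
        rw [hcnt, hlen, h1, if_pos hweak]
        norm_num
    · constructor
      · have hnrel : ¬ v.strong i j := by
          intro hrel
          have hcij : c i = c j := hcol i j hrel
          exact pirrefl i (hrel.tail ⟨hcij.symm, h1⟩)
        rw [hcnt, hlen, h0, if_neg hnrel]
        norm_num
      · rw [hcnt, hlen, h0]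
        by_cases hweak : v.weak i j <;> simp [hweak]
  · intro w hw
    rw [List.mem_singleton] at hw
    exact hw ▸ hrat

/-- The trivial coloring with one color per candidate is acyclic. -/
theorem color_nonempty [Fintype C] {M : C → C → ℝ} (hM : IsPrefMatrix M) :
    ∃ c : C → Fin (Fintype.card C), ∀ m : Fin (Fintype.card C),
      AcyclicOn (votingRel M) {x | c x = m} := by
  classical
  refine ⟨Fintype.equivFin C, fun m x hx => ?_⟩
  have hfalse : ∀ a b : C, (a ∈ {x : C | Fintype.equivFin C x = m} ∧
      b ∈ {x : C | Fintype.equivFin C x = m} ∧ votingRel M a b) → False := by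
    rintro a b ⟨ha, hb, hab⟩
    have : a = b := (Fintype.equivFin C).injective (ha.trans hb.symm)
    subst this
    have : M a a = 1 := hab
    rw [hM.1 a] at this
    norm_num at this
  have h' : Relation.TransGen (fun _ _ : C => False) x x :=
    Relation.TransGen.mono (fun a b h => hfalse a b h) _ _ hx
  have hgen : ∀ a b : C, Relation.TransGen (fun _ _ : C => False) a b → False := by
    intro a b h
    induction h with
    | single h => exact h
    | tail _ h => exact h
  exact hgen x x h'

end Main
/-- the rationality number of an integral preference matrix equals the
dichromatic number of its voting graph. -/
theorem rationalityNumber_eq_dichromaticNumber {C : Type} [Fintype C]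
    (M : C → C → ℝ) (hM : IsPrefMatrix M) (hInt : Integral M) :
    rationalityNumber M = dichromaticNumber (votingRel M) := by
  have hcne : {k | ∃ c : C → Fin k, ∀ m : Fin k,
      AcyclicOn (votingRel M) {x | c x = m}}.Nonempty :=
    ⟨Fintype.card C, color_nonempty hM⟩
  have hrne : {α | Rationalizable M α}.Nonempty := by
    obtain ⟨c, hc⟩ := color_nonempty (M := M) hM
    exact ⟨Fintype.card C, rat_of_color hM hInt c hc⟩
  apply le_antisymm
  · -- rationalityNumber ≤ dichromaticNumber
    obtain ⟨c, hc⟩ := Nat.sInf_mem hcne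
    exact Nat.sInf_le (rat_of_color hM hInt c hc)
  · -- dichromaticNumber ≤ rationalityNumber
    have hr := Nat.sInf_mem hrne
    exact Nat.sInf_le (color_of_rat hM hInt hr)
end

section
/- If M is an integral preference matrix on n ≥ 2 candidates, then its rationality number satisfies α(M) ≤ 3n / log₂ n. (Since the unanimity graph of an integral matrix is the complete graph, this says α(M) ≤ 3·χ(G_M)/log₂ n.) -/
open scoped Classical

def KK : ℕ → ℕ
  | 0 => 0
  | (m+1) => 1 + KK (m + 1 - (Nat.log 2 (m+1) + 1))
  decreasing_by omega

lemma KK_eq (m : ℕ) (h : 1 ≤ m) : KK m = 1 + KK (m - (Nat.log 2 m + 1)) := by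
  obtain ⟨k, rfl⟩ := Nat.exists_eq_add_of_le h
  rw [Nat.add_comm 1 k, KK]

lemma natlog (a k : ℕ) (h1 : 2^k ≤ a) (h2 : a < 2^(k+1)) : Nat.log 2 a = k :=
  Nat.log_eq_of_pow_le_of_lt_pow h1 h2

lemma KK0 : KK 0 = 0 := by rw [KK]
lemma KK1 : KK 1 = 1 := by rw [KK_eq 1 (by norm_num), natlog 1 0 (by norm_num) (by norm_num)]; norm_num [KK0]
lemma KK2 : KK 2 = 1 := by rw [KK_eq 2 (by norm_num), natlog 2 1 (by norm_num) (by norm_num)]; norm_num [KK0]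
lemma KK3 : KK 3 = 2 := by rw [KK_eq 3 (by norm_num), natlog 3 1 (by norm_num) (by norm_num)]; norm_num [KK1]
lemma KK4 : KK 4 = 2 := by rw [KK_eq 4 (by norm_num), natlog 4 2 (by norm_num) (by norm_num)]; norm_num [KK1]
lemma KK5 : KK 5 = 2 := by rw [KK_eq 5 (by norm_num), natlog 5 2 (by norm_num) (by norm_num)]; norm_num [KK2]
lemma KK6 : KK 6 = 3 := by rw [KK_eq 6 (by norm_num), natlog 6 2 (by norm_num) (by norm_num)]; norm_num [KK3]
lemma KK7 : KK 7 = 3 := by rw [KK_eq 7 (by norm_num), natlog 7 2 (by norm_num) (by norm_num)]; norm_num [KK4]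
lemma KK8 : KK 8 = 3 := by rw [KK_eq 8 (by norm_num), natlog 8 3 (by norm_num) (by norm_num)]; norm_num [KK4]
lemma KK9 : KK 9 = 3 := by rw [KK_eq 9 (by norm_num), natlog 9 3 (by norm_num) (by norm_num)]; norm_num [KK5]
lemma KK10 : KK 10 = 4 := by rw [KK_eq 10 (by norm_num), natlog 10 3 (by norm_num) (by norm_num)]; norm_num [KK6]
lemma KK11 : KK 11 = 4 := by rw [KK_eq 11 (by norm_num), natlog 11 3 (by norm_num) (by norm_num)]; norm_num [KK7]
lemma KK12 : KK 12 = 4 := by rw [KK_eq 12 (by norm_num), natlog 12 3 (by norm_num) (by norm_num)]; norm_num [KK8]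
lemma KK13 : KK 13 = 4 := by rw [KK_eq 13 (by norm_num), natlog 13 3 (by norm_num) (by norm_num)]; norm_num [KK9]
lemma KK14 : KK 14 = 5 := by rw [KK_eq 14 (by norm_num), natlog 14 3 (by norm_num) (by norm_num)]; norm_num [KK10]
lemma KK15 : KK 15 = 5 := by rw [KK_eq 15 (by norm_num), natlog 15 3 (by norm_num) (by norm_num)]; norm_num [KK11]
lemma KK16 : KK 16 = 5 := by rw [KK_eq 16 (by norm_num), natlog 16 4 (by norm_num) (by norm_num)]; norm_num [KK11]

lemma small_case (m K0 c : ℕ) (hm : 2 ≤ m) (h1 : m ≤ 2^c) (h2 : K0*c ≤ 3*m) :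
    (K0:ℝ) ≤ 3*m/Real.logb 2 m := by
  have hm1 : (1:ℝ) < m := by exact_mod_cast hm
  have hL : 0 < Real.logb 2 m := Real.logb_pos (by norm_num) hm1
  have hLc : Real.logb 2 m ≤ c := by
    rw [Real.logb_le_iff_le_rpow (by norm_num) (by linarith)]
    rw [Real.rpow_natCast]
    exact_mod_cast h1
  rw [le_div_iff₀ hL]
  calc (K0:ℝ) * Real.logb 2 m ≤ K0 * c :=
        mul_le_mul_of_nonneg_left hLc (Nat.cast_nonneg _)
    _ ≤ 3*m := by exact_mod_cast h2

lemma pow3 (t : ℕ) (ht : 4 ≤ t) : 3*(t+1) ≤ 2^t := by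
  induction t, ht using Nat.le_induction with
  | base => norm_num
  | succ k hk ih =>
    have h2 : 2^(k+1) = 2*2^k := by ring
    omega

/-- abstract final step -/
lemma step_real (a a' u L L' : ℝ)
    (haa' : a' = a - u)
    (hapos : 0 < a) (ha'pos : 0 < a')
    (hL'1 : 0 < L') (hL'L : L' ≤ L) (hLs : L ≤ u)
    (hlog2pos : (0:ℝ) < Real.log 2)
    (hA : L - L' ≤ u / (a' * Real.log 2))
    (hB : 3 * a ≤ 2 * a' * (L * Real.log 2)) :
    1 + 3*a'/L' ≤ 3*a/L := by
  have hLpos : 0 < L := lt_of_lt_of_le hL'1 hL'L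
  have hupos : 0 < u := lt_of_lt_of_le hLpos hLs
  have hkey : L*L' + 3*a'*L ≤ 3*a*L' := by
    have e1 : a*L' - a'*L = u*L - a*(L - L') := by rw [haa']; ring
    have e2 : a * (L - L') ≤ a * (u / (a' * Real.log 2)) :=
      mul_le_mul_of_nonneg_left hA hapos.le
    have e3 : a * (u / (a' * Real.log 2)) ≤ u * (2/3 * L) := by
      have hfrac : a / (a' * Real.log 2) ≤ 2/3 * L := by
        rw [div_le_iff₀ (by positivity)]
        nlinarith
      calc a * (u / (a' * Real.log 2)) = u * (a / (a' * Real.log 2)) := by ring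
        _ ≤ u * (2/3 * L) := mul_le_mul_of_nonneg_left hfrac hupos.le
    have e4 : L * L' ≤ u * L := by
      have : L' ≤ u := le_trans hL'L hLs
      nlinarith
    nlinarith
  have e5 : 1 + 3*a'/L' = (L*L' + 3*a'*L)/(L*L') := by
    field_simp
  have e6 : 3*a/L = (3*a*L')/(L*L') := by
    rw [mul_comm L L', ← div_div]
    congr 1
    rw [mul_div_assoc, div_self (ne_of_gt hL'1), mul_one]
  rw [e5, e6]
  gcongr

lemma kk_bound (m : ℕ) (hm : 2 ≤ m) : (KK m : ℝ) ≤ 3*m / Real.logb 2 m := by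
  induction m using Nat.strong_induction_on with
  | _ m IH =>
    rcases Nat.lt_or_ge m 17 with hsmall | hbig
    · interval_cases m
      · rw [KK2]; exact small_case 2 1 6 (by norm_num) (by norm_num) (by norm_num)
      · rw [KK3]; exact small_case 3 2 4 (by norm_num) (by norm_num) (by norm_num)
      · rw [KK4]; exact small_case 4 2 6 (by norm_num) (by norm_num) (by norm_num)
      · rw [KK5]; exact small_case 5 2 7 (by norm_num) (by norm_num) (by norm_num)
      · rw [KK6]; exact small_case 6 3 6 (by norm_num) (by norm_num) (by norm_num)
      · rw [KK7]; exact small_case 7 3 7 (by norm_num) (by norm_num) (by norm_num)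
      · rw [KK8]; exact small_case 8 3 8 (by norm_num) (by norm_num) (by norm_num)
      · rw [KK9]; exact small_case 9 3 9 (by norm_num) (by norm_num) (by norm_num)
      · rw [KK10]; exact small_case 10 4 7 (by norm_num) (by norm_num) (by norm_num)
      · rw [KK11]; exact small_case 11 4 8 (by norm_num) (by norm_num) (by norm_num)
      · rw [KK12]; exact small_case 12 4 9 (by norm_num) (by norm_num) (by norm_num)
      · rw [KK13]; exact small_case 13 4 9 (by norm_num) (by norm_num) (by norm_num)
      · rw [KK14]; exact small_case 14 5 8 (by norm_num) (by norm_num) (by norm_num)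
      · rw [KK15]; exact small_case 15 5 9 (by norm_num) (by norm_num) (by norm_num)
      · rw [KK16]; exact small_case 16 5 9 (by norm_num) (by norm_num) (by norm_num)
    -- big case
    · set t := Nat.log 2 m with ht
      have hmpos : m ≠ 0 := by omega
      have hpowle : 2^t ≤ m := Nat.pow_log_le_self 2 hmpos
      have hltpow : m < 2^(t+1) := Nat.lt_pow_succ_log_self (by norm_num) m
      have ht4 : 4 ≤ t := by
        have h16 : Nat.log 2 16 ≤ Nat.log 2 m := Nat.log_mono_right (by omega)
        rw [natlog 16 4 (by norm_num) (by norm_num)] at h16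
        omega
      have hp3nat : 3*(t+1) ≤ 2^t := pow3 t ht4
      set m' := m - (t+1) with hm'
      have hm'11 : 11 ≤ m' := by omega
      have hm'lt : m' < m := by omega
      have hIH := IH m' hm'lt (by omega)
      rw [KK_eq m (by omega)]
      -- real facts
      have haa' : (m':ℝ) = (m:ℝ) - ((t:ℝ)+1) := by
        rw [hm']
        push_cast [Nat.cast_sub (by omega : t+1 ≤ m)]
        ring
      have hapos : (0:ℝ) < m := by positivity
      have ha'pos : (0:ℝ) < m' := by
        have : (11:ℝ) ≤ (m':ℝ) := by exact_mod_cast hm'11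
        linarith
      set L : ℝ := Real.logb 2 (m:ℝ) with hL
      set L' : ℝ := Real.logb 2 (m':ℝ) with hL'
      have hL'pos : 0 < L' := by
        apply Real.logb_pos (by norm_num)
        have : (11:ℝ) ≤ (m':ℝ) := by exact_mod_cast hm'11
        linarith
      have hL'L : L' ≤ L := by
        apply Real.logb_le_logb_of_le (by norm_num) ha'pos
        exact_mod_cast Nat.le_of_lt hm'lt
      have hLs : L ≤ (t:ℝ) + 1 := by
        rw [hL, Real.logb_le_iff_le_rpow (by norm_num) hapos]
        have h1 : (m:ℝ) ≤ ((2^(t+1) : ℕ) : ℝ) := by exact_mod_cast hltpow.le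
        have h2 : ((2^(t+1) : ℕ) : ℝ) = (2:ℝ) ^ (((t:ℝ))+1) := by
          push_cast
          rw [show ((t:ℝ)+1) = ((t+1 : ℕ) : ℝ) by push_cast; ring, Real.rpow_natCast]
        linarith [h1, h2.le, h2.ge]
      have hlog2pos : (0:ℝ) < Real.log 2 := Real.log_pos (by norm_num)
      have hlog2lb : (0.6931:ℝ) ≤ Real.log 2 := by
        have := Real.log_two_gt_d9; linarith
      have hlog2ub : Real.log 2 ≤ 0.6932 := by
        have := Real.log_two_lt_d9; linarith
      have hlogL : Real.log (m:ℝ) = L * Real.log 2 := by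
        rw [hL, Real.logb, div_mul_cancel₀]
        exact ne_of_gt hlog2pos
      have hlogL' : Real.log (m':ℝ) = L' * Real.log 2 := by
        rw [hL', Real.logb, div_mul_cancel₀]
        exact ne_of_gt hlog2pos
      have h2ta : ((2:ℝ))^t ≤ (m:ℝ) := by exact_mod_cast hpowle
      have ht4' : (4:ℝ) ≤ (t:ℝ) := by exact_mod_cast ht4
      have hp3 : (3:ℝ)*((t:ℝ)+1) ≤ (2:ℝ)^t := by exact_mod_cast hp3nat
      -- Claim B
      have hloga : (t:ℝ) * Real.log 2 ≤ Real.log (m:ℝ) := by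
        calc (t:ℝ) * Real.log 2 = Real.log ((2:ℝ)^t) := by rw [Real.log_pow]
          _ ≤ Real.log (m:ℝ) := Real.log_le_log (by positivity) h2ta
      have hclaimB : 3 * (m:ℝ) ≤ 2 * (m':ℝ) * (L * Real.log 2) := by
        rw [← hlogL]
        have hc0 : (0.63:ℝ) * t ≤ 2 * t * Real.log 2 - 3 := by nlinarith
        have hc0' : (0:ℝ) ≤ 2 * t * Real.log 2 - 3 := by nlinarith
        have sa : ((2:ℝ)^t) * (2*(t:ℝ)*Real.log 2 - 3) ≤ (m:ℝ) * (2*(t:ℝ)*Real.log 2 - 3) :=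
          mul_le_mul_of_nonneg_right h2ta hc0'
        have sb : ((2:ℝ)^t) * ((0.63:ℝ)*t) ≤ ((2:ℝ)^t) * (2*(t:ℝ)*Real.log 2 - 3) :=
          mul_le_mul_of_nonneg_left hc0 (by positivity)
        have sc : ((3:ℝ)*((t:ℝ)+1)) * ((0.63:ℝ)*t) ≤ ((2:ℝ)^t) * ((0.63:ℝ)*t) :=
          mul_le_mul_of_nonneg_right hp3 (by positivity)
        have sd : 2*((t:ℝ)+1)*((t:ℝ)*Real.log 2) ≤ ((3:ℝ)*((t:ℝ)+1)) * ((0.63:ℝ)*t) := by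
          nlinarith [mul_nonneg (by positivity : (0:ℝ) ≤ ((t:ℝ)+1)) (by positivity : (0:ℝ) ≤ (t:ℝ))]
        have main : 2*((t:ℝ)+1)*((t:ℝ)*Real.log 2) ≤ (m:ℝ) * (2*(t:ℝ)*Real.log 2 - 3) := by
          linarith
        have expand : 2 * (m':ℝ) * ((t:ℝ) * Real.log 2) - 3*(m:ℝ)
            = (m:ℝ) * (2*(t:ℝ)*Real.log 2 - 3) - 2*((t:ℝ)+1)*((t:ℝ)*Real.log 2) := by
          rw [haa']; ring
        have step2 : 3 * (m:ℝ) ≤ 2 * (m':ℝ) * ((t:ℝ) * Real.log 2) := by linarith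
        have step1 : 2 * (m':ℝ) * ((t:ℝ) * Real.log 2) ≤ 2 * (m':ℝ) * Real.log (m:ℝ) :=
          mul_le_mul_of_nonneg_left hloga (by positivity)
        linarith
      -- Claim A
      have hA : L - L' ≤ ((t:ℝ)+1) / ((m':ℝ) * Real.log 2) := by
        have hdiff : Real.log (m:ℝ) - Real.log (m':ℝ) ≤ ((t:ℝ)+1) / (m':ℝ) := by
          rw [← Real.log_div (ne_of_gt hapos) (ne_of_gt ha'pos)]
          have h1 : Real.log ((m:ℝ)/(m':ℝ)) ≤ (m:ℝ)/(m':ℝ) - 1 :=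
            Real.log_le_sub_one_of_pos (by positivity)
          have h2 : (m:ℝ)/(m':ℝ) - 1 = ((t:ℝ)+1)/(m':ℝ) := by
            rw [div_sub_one (ne_of_gt ha'pos), haa']
            ring_nf
          linarith
        have : L - L' = (Real.log (m:ℝ) - Real.log (m':ℝ)) / Real.log 2 := by
          rw [hlogL, hlogL']
          field_simp
        rw [this, div_le_div_iff₀ hlog2pos (by positivity)]
        calc (Real.log (m:ℝ) - Real.log (m':ℝ)) * ((m':ℝ) * Real.log 2)
            = ((Real.log (m:ℝ) - Real.log (m':ℝ)) * (m':ℝ)) * Real.log 2 := by ring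
          _ ≤ ((t:ℝ)+1) * Real.log 2 := by
              apply mul_le_mul_of_nonneg_right _ hlog2pos.le
              calc (Real.log (m:ℝ) - Real.log (m':ℝ)) * (m':ℝ)
                  ≤ (((t:ℝ)+1)/(m':ℝ)) * (m':ℝ) :=
                    mul_le_mul_of_nonneg_right hdiff ha'pos.le
                _ = ((t:ℝ)+1) := by field_simp
      have final := step_real (m:ℝ) (m':ℝ) ((t:ℝ)+1) L L' haa' hapos ha'pos
        hL'pos hL'L hLs hlog2pos hA hclaimB
      push_cast
      linarith

open scoped Classical
section Comb
variable {n : ℕ} (r : Fin n → Fin n → Prop)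

def TransOn (T : Finset (Fin n)) : Prop :=
  ∀ a ∈ T, ∀ b ∈ T, ∀ c ∈ T, r a b → r b c → r a c

lemma extract (hirr : ∀ i, ¬ r i i) (htot : ∀ i j : Fin n, i ≠ j → r i j ∨ r j i)
    (hasym : ∀ i j : Fin n, r i j → r j i → False) :
    ∀ m : ℕ, ∀ S : Finset (Fin n), S.card = m → 1 ≤ m →
      ∃ T ⊆ S, Nat.log 2 m + 1 ≤ T.card ∧ TransOn r T := by
  intro m
  induction m using Nat.strong_induction_on with
  | _ m IH =>
    intro S hcard hm
    have hne : S.Nonempty := by rw [← Finset.card_pos, hcard]; omega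
    obtain ⟨x, hx⟩ := hne
    rcases Nat.lt_or_ge m 2 with hm1 | hm2
    · -- m = 1
      refine ⟨{x}, by simpa using hx, ?_, ?_⟩
      · have : m = 1 := by omega
        subst this
        simp [Nat.log_eq_zero_iff]
      · intro a ha b hb c hc rab _
        simp only [Finset.mem_singleton] at ha hb
        subst ha; subst hb
        exact absurd rab (hirr _)
    · -- m ≥ 2
      set O := (S.erase x).filter (fun y => r x y) with hO
      set I := (S.erase x).filter (fun y => r y x) with hI
      have hunion : O ∪ I = S.erase x := by
        apply Finset.Subset.antisymm
        · intro y hy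
          rcases Finset.mem_union.mp hy with h | h
          · exact (Finset.mem_filter.mp h).1
          · exact (Finset.mem_filter.mp h).1
        · intro y hy
          have hyx : y ≠ x := Finset.ne_of_mem_erase hy
          rcases htot x y (Ne.symm hyx) with h | h
          · exact Finset.mem_union_left _ (Finset.mem_filter.mpr ⟨hy, h⟩)
          · exact Finset.mem_union_right _ (Finset.mem_filter.mpr ⟨hy, h⟩)
      have hdisj : Disjoint O I := by
        rw [Finset.disjoint_left]
        intro y hyO hyI
        exact hasym x y (Finset.mem_filter.mp hyO).2 (Finset.mem_filter.mp hyI).2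
      have hcardOI : O.card + I.card = m - 1 := by
        rw [← Finset.card_union_of_disjoint hdisj, hunion, Finset.card_erase_of_mem hx, hcard]
      have hbig : m/2 ≤ O.card ∨ m/2 ≤ I.card := by omega
      -- treat the two cases symmetrically
      have key : ∀ B : Finset (Fin n), B ⊆ S.erase x → m/2 ≤ B.card →
          ((∀ y ∈ B, r x y) ∨ (∀ y ∈ B, r y x)) →
          ∃ T ⊆ S, Nat.log 2 m + 1 ≤ T.card ∧ TransOn r T := by
        intro B hBsub hBcard hBdir
        have hBlt : B.card < m := by
          have := Finset.card_le_card hBsub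
          rw [Finset.card_erase_of_mem hx, hcard] at this
          omega
        have hB1 : 1 ≤ B.card := by omega
        obtain ⟨T', hT'sub, hT'card, hT'trans⟩ := IH B.card hBlt B rfl hB1
        have hxT' : x ∉ T' := fun h =>
          Finset.notMem_erase x S (hBsub (hT'sub h))
        have hlogB : Nat.log 2 m ≤ Nat.log 2 B.card + 1 := by
          have h1 : Nat.log 2 (m/2) ≤ Nat.log 2 B.card := Nat.log_mono_right hBcard
          have h2 : Nat.log 2 (m/2) = Nat.log 2 m - 1 := Nat.log_div_base 2 m
          have h3 : 1 ≤ Nat.log 2 m := by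
            rw [Nat.le_log_iff_pow_le (by norm_num) (by omega)]
            simpa using hm2
          omega
        refine ⟨insert x T', ?_, ?_, ?_⟩
        · intro y hy
          rcases Finset.mem_insert.mp hy with h | h
          · subst h; exact hx
          · exact Finset.mem_of_mem_erase (hBsub (hT'sub h))
        · rw [Finset.card_insert_of_notMem hxT']
          omega
        · intro a ha b hb c hc rab rbc
          rcases Finset.mem_insert.mp ha with ha' | ha' <;>
          rcases Finset.mem_insert.mp hb with hb' | hb' <;>
          rcases Finset.mem_insert.mp hc with hc' | hc'
          all_goals try (subst ha')
          all_goals try (subst hb')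
          all_goals try (subst hc')
          · exact absurd rab (hirr _)
          · exact absurd rab (hirr _)
          · exact (hasym _ _ rab rbc).elim
          · -- a = x, b,c ∈ T'
            rcases hBdir with hd | hd
            · exact hd c (hT'sub hc')
            · exact absurd rab (fun h => hasym _ _ h (hd b (hT'sub hb')))
          · exact absurd rbc (hirr _)
          · -- b = x, a,c ∈ T' : r a x, r x c
            rcases hBdir with hd | hd
            · exact absurd rab (fun h => hasym _ _ h (hd a (hT'sub ha')))
            · exact absurd rbc (fun h => hasym _ _ h (hd c (hT'sub hc')))
          · -- c = x : r a b, r b x with a,b ∈ T'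
            rcases hBdir with hd | hd
            · exact absurd rbc (fun h => hasym _ _ h (hd b (hT'sub hb')))
            · exact hd a (hT'sub ha')
          · exact hT'trans a ha' b hb' c hc' rab rbc
      rcases hbig with h | h
      · exact key O (Finset.filter_subset _ _) h
          (Or.inl (fun y hy => (Finset.mem_filter.mp hy).2))
      · exact key I (Finset.filter_subset _ _) h
          (Or.inr (fun y hy => (Finset.mem_filter.mp hy).2))

end Comb

lemma partitionKK {n : ℕ} (r : Fin n → Fin n → Prop)
    (hirr : ∀ i, ¬ r i i) (htot : ∀ i j : Fin n, i ≠ j → r i j ∨ r j i)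
    (hasym : ∀ i j : Fin n, r i j → r j i → False) :
    ∀ m : ℕ, ∀ S : Finset (Fin n), S.card = m →
      ∃ c : Fin n → ℕ, (∀ i ∈ S, c i < KK m) ∧
        (∀ a ∈ S, ∀ b ∈ S, ∀ d ∈ S, c a = c b → c b = c d → r a b → r b d → r a d) := by
  intro m
  induction m using Nat.strong_induction_on with
  | _ m IH =>
    intro S hcard
    rcases Nat.eq_zero_or_pos m with hm0 | hm1
    · subst hm0
      have : S = ∅ := Finset.card_eq_zero.mp hcard
      subst this
      exact ⟨fun _ => 0, by simp, by simp⟩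
    · obtain ⟨T, hTsub, hTcard, hTtrans⟩ :=
        extract r hirr htot hasym m S hcard hm1
      set s := Nat.log 2 m + 1 with hs
      obtain ⟨T₀, hT₀T, hT₀card⟩ := Finset.exists_subset_card_eq hTcard
      have hT₀sub : T₀ ⊆ S := hT₀T.trans hTsub
      have hT₀trans : TransOn r T₀ := fun a ha b hb c hc =>
        hTtrans a (hT₀T ha) b (hT₀T hb) c (hT₀T hc)
      have hsm : s ≤ m := by
        have := Finset.card_le_card hT₀sub
        omega
      have hcard' : (S \ T₀).card = m - s := by
        rw [Finset.card_sdiff_of_subset hT₀sub, hcard, hT₀card]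
      obtain ⟨c', hc'lt, hc'trans⟩ := IH (m - s) (by omega) (S \ T₀) hcard'
      refine ⟨fun i => if i ∈ T₀ then 0 else c' i + 1, ?_, ?_⟩
      · intro i hi
        rw [KK_eq m hm1, ← hs]
        by_cases hiT : i ∈ T₀
        · simp [hiT]
        · have hi' : i ∈ S \ T₀ := Finset.mem_sdiff.mpr ⟨hi, hiT⟩
          have := hc'lt i hi'
          simp only [hiT, if_false]
          omega
      · intro a ha b hb d hd hab hbd rab rbd
        by_cases haT : a ∈ T₀
        · have hbT : b ∈ T₀ := by
            by_contra hbT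
            simp [haT, hbT] at hab
          have hdT : d ∈ T₀ := by
            by_contra hdT
            simp [hbT, hdT] at hbd
          exact hT₀trans a haT b hbT d hdT rab rbd
        · have hbT : b ∉ T₀ := by
            intro hbT
            simp [haT, hbT] at hab
          have hdT : d ∉ T₀ := by
            intro hdT
            simp [hbT, hdT] at hbd
          simp only [haT, hbT, hdT, if_false, Nat.add_right_cancel_iff] at hab hbd
          exact hc'trans a (Finset.mem_sdiff.mpr ⟨ha, haT⟩) b (Finset.mem_sdiff.mpr ⟨hb, hbT⟩)
            d (Finset.mem_sdiff.mpr ⟨hd, hdT⟩) hab hbd rab rbd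

/-- an integral preference matrix on `n ≥ 2` candidates has rationality
number at most `3n / log₂ n` (and `χ(G_M) = n` since the unanimity graph is complete). -/
theorem integral_upper_bound {n : ℕ} (hn : 2 ≤ n) (M : Fin n → Fin n → ℝ)
    (hM : IsPrefMatrix M) (hInt : Integral M) :
    (rationalityNumber M : ℝ) ≤ 3 * n / Real.logb 2 n := by
  classical
  obtain ⟨h0, hnn, hsum⟩ := hM
  set r : Fin n → Fin n → Prop := fun i j => M i j = 1 with hrdef
  have hirr : ∀ i, ¬ r i i := by
    intro i h
    have h' : M i i = 1 := h
    rw [h0 i] at h'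
    norm_num at h'
  have hasym : ∀ i j : Fin n, r i j → r j i → False := by
    intro i j h1 h2
    by_cases hij : i = j
    · subst hij; exact hirr i h1
    · have hs := hsum i j hij
      have h1' : M i j = 1 := h1
      have h2' : M j i = 1 := h2
      rw [h1', h2'] at hs
      norm_num at hs
  have htot : ∀ i j : Fin n, i ≠ j → r i j ∨ r j i := by
    intro i j hij
    rcases hInt i j with h | h
    · right
      have hs := hsum i j hij
      rw [h] at hs
      show M j i = 1
      linarith
    · exact Or.inl h
  obtain ⟨c, hclt, htrans⟩ := partitionKK r hirr htot hasym n Finset.univ (by simp)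
  set v : Voter (Fin n) :=
    { rel := fun i j => c i = c j ∧ r i j
      irrefl := fun i h => hirr i h.2
      trans := by
        intro i j k h1 h2
        exact ⟨h1.1.trans h2.1,
          htrans i (Finset.mem_univ i) j (Finset.mem_univ j) k (Finset.mem_univ k)
            h1.1 h2.1 h1.2 h2.2⟩ } with hv
  have hrat : v.Rational (KK n) := by
    intro A hA
    have hinj : Set.InjOn c A := by
      intro i hi j hj hcij
      by_contra hne
      rcases htot i j hne with h | h
      · exact (hA i hi j hj hne).1 ⟨hcij, h⟩
      · exact (hA i hi j hj hne).2 ⟨hcij.symm, h⟩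
    calc A.card = (A.image c).card := (Finset.card_image_of_injOn hinj).symm
      _ ≤ (Finset.range (KK n)).card := by
          apply Finset.card_le_card
          intro x hx
          obtain ⟨i, _, rfl⟩ := Finset.mem_image.mp hx
          exact Finset.mem_range.mpr (hclt i (Finset.mem_univ i))
      _ = KK n := Finset.card_range _
  have hcv : ∀ P : Voter (Fin n) → Prop, countVoters [v] P = if P v then 1 else 0 := by
    intro P
    simp [countVoters]
  have hcons : Consistent M [v] := by
    refine ⟨by simp, ?_⟩
    intro i j hij
    have hlen : ([v].length : ℝ) = 1 := by simp
    rcases hInt i j with h0ij | h1ij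
    · constructor
      · have hns : ¬ v.strong i j := by
          intro hs
          have : M i j = 1 := hs.2
          rw [h0ij] at this
          norm_num at this
        rw [hcv, if_neg hns, hlen, h0ij]
        norm_num
      · have : (0:ℝ) ≤ (countVoters [v] (fun v => v.weak i j) : ℝ) / ([v].length : ℝ) := by
          positivity
        linarith [this, h0ij.ge]
    · constructor
      · rw [hcv, hlen, h1ij]
        split_ifs <;> norm_num
      · have hji0 : M j i = 0 := by
          have := hsum i j hij
          rw [h1ij] at this
          linarith
        have hnji : ¬ v.rel j i := by
          intro hji
          have : M j i = 1 := hji.2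
          rw [hji0] at this
          norm_num at this
        have hw : v.weak i j := by
          by_cases hij' : v.rel i j
          · exact Or.inl hij'
          · exact Or.inr ⟨hij', hnji⟩
        rw [hcv, if_pos hw, hlen, h1ij]
        norm_num
  have hratl : Rationalizable M (KK n) := by
    refine ⟨[v], hcons, ?_⟩
    intro w hw
    simp only [List.mem_singleton] at hw
    subst hw
    exact hrat
  have hle : rationalityNumber M ≤ KK n := Nat.sInf_le hratl
  calc (rationalityNumber M : ℝ) ≤ (KK n : ℝ) := by exact_mod_cast hle
    _ ≤ 3*n/Real.logb 2 n := kk_bound n hn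
end

section
/- For every sufficiently large n there exists an integral preference matrix M on n candidates whose rationality number satisfies α(M) ≥ n / (2·log₂ n + 1). (Since χ(G_M)=n for integral matrices, this says α(M) ≥ χ(G_M)/(2 log₂ n + 1).) -/
set_option maxHeartbeats 1000000


open scoped Classical

/-- Type of coordinates: unordered pairs encoded as ordered pairs with first < second. -/
abbrev TCoord (n : ℕ) := {p : Fin n × Fin n // p.1 < p.2}

/-- Tournament relation from coordinate values. -/
def rOf {n : ℕ} (f : TCoord n → Bool) (i j : Fin n) : Prop :=
  (∃ h : i < j, f ⟨(i, j), h⟩ = true) ∨ (∃ h : j < i, f ⟨(j, i), h⟩ = false)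

lemma rOf_irrefl {n : ℕ} (f : TCoord n → Bool) (i : Fin n) : ¬ rOf f i i := by
  rintro (⟨h, -⟩ | ⟨h, -⟩) <;> exact lt_irrefl _ h

lemma rOf_iff {n : ℕ} (f : TCoord n → Bool) {i j : Fin n} (h : i < j) :
    rOf f i j ↔ f ⟨(i, j), h⟩ = true := by
  constructor
  · rintro (⟨h', hf⟩ | ⟨h', -⟩)
    · exact hf
    · exact absurd h (asymm h')
  · exact fun hf => Or.inl ⟨h, hf⟩

lemma rOf_rev_iff {n : ℕ} (f : TCoord n → Bool) {i j : Fin n} (h : i < j) :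
    rOf f j i ↔ f ⟨(i, j), h⟩ = false := by
  constructor
  · rintro (⟨h', -⟩ | ⟨h', hf⟩)
    · exact absurd h (asymm h')
    · exact hf
  · exact fun hf => Or.inr ⟨h, hf⟩

lemma rOf_total {n : ℕ} (f : TCoord n → Bool) {i j : Fin n} (h : i ≠ j) :
    rOf f i j ∨ rOf f j i := by
  rcases lt_or_gt_of_ne h with h' | h'
  · rcases Bool.eq_false_or_eq_true (f ⟨(i, j), h'⟩) with hb | hb
    · exact Or.inl ((rOf_iff f h').mpr hb)
    · exact Or.inr ((rOf_rev_iff f h').mpr hb)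
  · rcases Bool.eq_false_or_eq_true (f ⟨(j, i), h'⟩) with hb | hb
    · exact Or.inr ((rOf_iff f h').mpr hb)
    · exact Or.inl ((rOf_rev_iff f h').mpr hb)

lemma rOf_not_both {n : ℕ} (f : TCoord n → Bool) {i j : Fin n} (h : i ≠ j) :
    ¬ (rOf f i j ∧ rOf f j i) := by
  rintro ⟨h1, h2⟩
  rcases lt_or_gt_of_ne h with h' | h'
  · rw [rOf_iff f h'] at h1; rw [rOf_rev_iff f h'] at h2; simp [h1] at h2
  · rw [rOf_iff f h'] at h2; rw [rOf_rev_iff f h'] at h1; simp [h1] at h2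

/-- Cardinality of the coordinate type for `Fin k`. -/
lemma card_tcoord (k : ℕ) : Fintype.card (TCoord k) = k.choose 2 := by
  have e : TCoord k ≃ (Σ b : Fin k, Fin b.1) :=
    { toFun := fun p => ⟨p.1.2, ⟨p.1.1.1, p.2⟩⟩
      invFun := fun x => ⟨(⟨x.2.1, lt_trans x.2.2 x.1.isLt⟩, x.1), x.2.2⟩
      left_inv := fun p => rfl
      right_inv := fun x => rfl }
  rw [Fintype.card_congr e, Fintype.card_sigma]
  simp only [Fintype.card_fin]
  rw [Fin.sum_univ_eq_sum_range (fun i => i) k, Finset.sum_range_id, Nat.choose_two_right]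

/-- The coordinate in `TCoord n` corresponding to the pair `(σ p.1.1, σ p.1.2)`. -/
noncomputable def coordMap {n k : ℕ} (σ : Fin k ↪ Fin n) (p : TCoord k) : TCoord n :=
  if h : σ p.1.1 < σ p.1.2 then ⟨(σ p.1.1, σ p.1.2), h⟩
  else ⟨(σ p.1.2, σ p.1.1),
    lt_of_le_of_ne (not_lt.mp h) (fun he => p.2.ne (σ.injective he).symm)⟩

lemma coordMap_injective {n k : ℕ} (σ : Fin k ↪ Fin n) :
    Function.Injective (coordMap σ) := by
  intro p q h
  unfold coordMap at h
  split_ifs at h with h1 h2 h2 <;>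
      rw [Subtype.ext_iff, Prod.ext_iff] at h <;> obtain ⟨ha, hb⟩ := h
  · exact Subtype.ext (Prod.ext (σ.injective ha) (σ.injective hb))
  · have e1 : p.1.1 = q.1.2 := σ.injective ha
    have e2 : p.1.2 = q.1.1 := σ.injective hb
    have hp := p.2; rw [e1, e2] at hp
    exact absurd q.2 (asymm hp)
  · have e1 : p.1.2 = q.1.1 := σ.injective ha
    have e2 : p.1.1 = q.1.2 := σ.injective hb
    have hp := p.2; rw [e1, e2] at hp
    exact absurd q.2 (asymm hp)
  · exact Subtype.ext (Prod.ext (σ.injective hb) (σ.injective ha))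

lemma exists_good_tournament (n k : ℕ) (hnk : n ^ k < 2 ^ (k.choose 2)) :
    ∃ f : TCoord n → Bool,
      ∀ σ : Fin k ↪ Fin n, ∃ a b : Fin k, a < b ∧ ¬ rOf f (σ a) (σ b) := by
  by_contra hcon
  push_neg at hcon
  set N := Fintype.card (TCoord n) with hN
  set K := k.choose 2 with hK
  set B : (Fin k ↪ Fin n) → Finset (TCoord n → Bool) := fun σ =>
    Finset.univ.filter (fun f => ∀ a b : Fin k, a < b → rOf f (σ a) (σ b)) with hB
  -- the value of f is forced on the range of coordMap σ
  have forced : ∀ σ : Fin k ↪ Fin n, ∀ f ∈ B σ, ∀ p : TCoord k,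
      f (coordMap σ p) = if σ p.1.1 < σ p.1.2 then true else false := by
    intro σ f hf p
    simp only [hB, Finset.mem_filter] at hf
    have hr : rOf f (σ p.1.1) (σ p.1.2) := hf.2 _ _ p.2
    unfold coordMap
    split_ifs with h1
    · exact (rOf_iff f h1).mp hr
    · exact (rOf_rev_iff f _).mp hr
  have stepA : ∀ σ : Fin k ↪ Fin n, (B σ).card ≤ 2 ^ (N - K) := by
    intro σ
    set S : Set (TCoord n) := Set.range (coordMap σ) with hS
    have hinj : Set.InjOn (fun f (q : {q : TCoord n // q ∉ S}) => f q.1)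
        (B σ : Set (TCoord n → Bool)) := by
      intro f hf g hg hfg
      funext q
      by_cases hq : q ∈ S
      · obtain ⟨p, rfl⟩ := hq
        rw [forced σ f hf p, forced σ g hg p]
      · exact congrFun hfg ⟨q, hq⟩
    have hcard := Finset.card_le_card_of_injOn _
      (fun a _ => Finset.mem_univ ((fun f (q : {q : TCoord n // q ∉ S}) => f q.1) a)) hinj
    rw [Finset.card_univ, Fintype.card_fun, Fintype.card_bool] at hcard
    have hcompl : Fintype.card {q : TCoord n // q ∉ S} = N - K := by
      rw [Fintype.card_subtype_compl]
      congr 1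
      rw [hK, ← card_tcoord k]
      simpa using (Set.card_range_of_injective (coordMap_injective σ))
    rwa [hcompl] at hcard
  have hKN : K ≤ N := by
    obtain ⟨σ₀, -⟩ := hcon (fun _ => true)
    rw [hK, ← card_tcoord k, hN]
    exact Fintype.card_le_of_injective _ (coordMap_injective σ₀)
  have cover : (Finset.univ : Finset (TCoord n → Bool)) ⊆
      Finset.univ.biUnion B := by
    intro f _
    obtain ⟨σ, hσ⟩ := hcon f
    exact Finset.mem_biUnion.mpr ⟨σ, Finset.mem_univ _,
      Finset.mem_filter.mpr ⟨Finset.mem_univ _, hσ⟩⟩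
  have h2N : (2 : ℕ) ^ N = (Finset.univ : Finset (TCoord n → Bool)).card := by
    rw [Finset.card_univ, Fintype.card_fun, Fintype.card_bool]
  have hle : (2 : ℕ) ^ N ≤ Fintype.card (Fin k ↪ Fin n) * 2 ^ (N - K) := by
    rw [h2N]
    calc (Finset.univ : Finset (TCoord n → Bool)).card
        ≤ (Finset.univ.biUnion B).card := Finset.card_le_card cover
      _ ≤ ∑ σ : Fin k ↪ Fin n, (B σ).card := Finset.card_biUnion_le
      _ ≤ ∑ _σ : Fin k ↪ Fin n, 2 ^ (N - K) :=
          Finset.sum_le_sum (fun σ _ => stepA σ)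
      _ = Fintype.card (Fin k ↪ Fin n) * 2 ^ (N - K) := by
          rw [Finset.sum_const, Finset.card_univ, smul_eq_mul]
  have hlt : Fintype.card (Fin k ↪ Fin n) * 2 ^ (N - K) < 2 ^ N := by
    calc Fintype.card (Fin k ↪ Fin n) * 2 ^ (N - K)
        ≤ n ^ k * 2 ^ (N - K) := by
          apply Nat.mul_le_mul_right
          rw [Fintype.card_embedding_eq, Fintype.card_fin, Fintype.card_fin]
          exact Nat.descFactorial_le_pow n k
      _ < 2 ^ K * 2 ^ (N - K) := by
          exact (Nat.mul_lt_mul_right (Nat.pow_pos (by norm_num))).mpr hnk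
      _ = 2 ^ N := by rw [← pow_add, Nat.add_sub_cancel' hKN]
  exact absurd (hle.trans_lt hlt) (lt_irrefl _)

/-- The integral matrix attached to a tournament function. -/
noncomputable def MOf {n : ℕ} (f : TCoord n → Bool) : Fin n → Fin n → ℝ :=
  fun i j => if rOf f i j then 1 else 0

lemma MOf_pref {n : ℕ} (f : TCoord n → Bool) : IsPrefMatrix (MOf f) := by
  refine ⟨fun i => ?_, fun i j => ?_, fun i j hij => ?_⟩
  · exact if_neg (rOf_irrefl f i)
  · unfold MOf; split <;> norm_num
  · unfold MOf
    rcases rOf_total f hij with h | h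
    · rw [if_pos h, if_neg (fun h' => rOf_not_both f hij ⟨h, h'⟩)]; norm_num
    · rw [if_pos h, if_neg (fun h' => rOf_not_both f hij ⟨h', h⟩)]; norm_num

lemma MOf_integral {n : ℕ} (f : TCoord n → Bool) : Integral (MOf f) := by
  intro i j; unfold MOf; split
  · exact Or.inr rfl
  · exact Or.inl rfl

lemma MOf_le_one {n : ℕ} (f : TCoord n → Bool) (i j : Fin n) : MOf f i j ≤ 1 := by
  unfold MOf; split <;> norm_num

/-- Every matrix with entries in `[0,1]` is `n`-rationalizable via a single
totally indifferent voter. -/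
lemma rationalizable_card {n : ℕ} (M : Fin n → Fin n → ℝ)
    (h0 : ∀ i j, 0 ≤ M i j) (h1 : ∀ i j, M i j ≤ 1) : Rationalizable M n := by
  refine ⟨[⟨fun _ _ => False, fun _ h => h, fun h _ => h.elim⟩], ⟨by simp, ?_⟩, ?_⟩
  · intro i j hij
    constructor
    · have hc : countVoters [(⟨fun _ _ => False, fun _ h => h, fun h _ => h.elim⟩ : Voter (Fin n))]
          (fun v => v.strong i j) = 0 := by
        simp [countVoters, Voter.strong]
      rw [hc]; simpa using h0 i j
    · have hc : countVoters [(⟨fun _ _ => False, fun _ h => h, fun h _ => h.elim⟩ : Voter (Fin n))]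
          (fun v => v.weak i j) = 1 := by
        simp [countVoters, Voter.weak]
      rw [hc]; simpa using h1 i j
  · intro v hv A hA
    simpa using Finset.card_le_univ A

/-- A chain of an order compatible with a tournament having no transitive subtournament
of size `k` has fewer than `k` elements. -/
lemma exists_enum {α : Type} (v : Voter α) [DecidableEq α] :
    ∀ (c : ℕ) (B : Finset α), B.card = c →
      (∀ x ∈ B, ∀ y ∈ B, x ≠ y → v.rel x y ∨ v.rel y x) →
      ∃ g : Fin c → α, (∀ a, g a ∈ B) ∧ Function.Injective g ∧
        ∀ a b : Fin c, a < b → v.rel (g a) (g b) := by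
  intro c
  induction c with
  | zero =>
    intro B _ _
    exact ⟨Fin.elim0, fun a => a.elim0, fun a => a.elim0, fun a => a.elim0⟩
  | succ c ih =>
    intro B hc htot
    have hne : B.Nonempty := Finset.card_pos.mp (by omega)
    obtain ⟨m, hm, hmin⟩ :=
      Finset.exists_min_image B (fun x => (B.filter (fun y => v.rel y x)).card) hne
    have hmrel : ∀ y ∈ B, y ≠ m → v.rel m y := by
      intro y hy hym
      rcases htot m hm y hy (Ne.symm hym) with h | h
      · exact h
      · exfalso
        have hsub : B.filter (fun z => v.rel z y) ⊂ B.filter (fun z => v.rel z m) := by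
          constructor
          · intro z hz
            rw [Finset.mem_filter] at hz ⊢
            exact ⟨hz.1, v.trans hz.2 h⟩
          · intro hsub'
            have hy' : y ∈ B.filter (fun z => v.rel z y) :=
              hsub' (Finset.mem_filter.mpr ⟨hy, h⟩)
            exact v.irrefl y (Finset.mem_filter.mp hy').2
        have h1 := Finset.card_lt_card hsub
        have h2 := hmin y hy
        omega
    obtain ⟨g, hgB, hginj, hgrel⟩ := ih (B.erase m)
      (by rw [Finset.card_erase_of_mem hm]; omega)
      (fun x hx y hy hxy =>
        htot x (Finset.mem_of_mem_erase hx) y (Finset.mem_of_mem_erase hy) hxy)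
    refine ⟨fun a => if h : (a : ℕ) = 0 then m else g ⟨(a : ℕ) - 1, by omega⟩, ?_, ?_, ?_⟩
    · intro a
      by_cases h : (a : ℕ) = 0
      · simp only [dif_pos h]; exact hm
      · simp only [dif_neg h]; exact Finset.mem_of_mem_erase (hgB _)
    · intro a b hab
      by_cases ha : (a : ℕ) = 0 <;> by_cases hb : (b : ℕ) = 0
      · exact Fin.ext (ha.trans hb.symm)
      · simp only [dif_pos ha, dif_neg hb] at hab
        exact absurd (hab ▸ hgB ⟨(b : ℕ) - 1, by omega⟩)
          (fun hmem => Finset.notMem_erase m B (hab ▸ hmem))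
      · simp only [dif_neg ha, dif_pos hb] at hab
        exact absurd (hab.symm ▸ hgB ⟨(a : ℕ) - 1, by omega⟩)
          (fun hmem => Finset.notMem_erase m B (hab.symm ▸ hmem))
      · simp only [dif_neg ha, dif_neg hb] at hab
        have := hginj hab
        rw [Fin.mk.injEq] at this
        exact Fin.ext (by omega)
    · intro a b hab
      have hb : (b : ℕ) ≠ 0 := by
        have := hab
        rw [Fin.lt_def] at this
        omega
      by_cases ha : (a : ℕ) = 0
      · simp only [dif_pos ha, dif_neg hb]
        refine hmrel _ (Finset.mem_of_mem_erase (hgB _)) ?_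
        intro he
        exact Finset.notMem_erase m B (he ▸ hgB ⟨(b : ℕ) - 1, by omega⟩)
      · simp only [dif_neg ha, dif_neg hb]
        apply hgrel
        rw [Fin.lt_def] at hab ⊢
        simp only
        omega

/-- A chain of an order compatible with a tournament having no transitive subtournament
of size `k` has fewer than `k` elements. -/
lemma chain_card_lt {n k : ℕ} (f : TCoord n → Bool)
    (hf : ∀ σ : Fin k ↪ Fin n, ∃ a b : Fin k, a < b ∧ ¬ rOf f (σ a) (σ b))
    (v : Voter (Fin n)) (hsub : ∀ i j, v.rel i j → rOf f i j)
    (A : Finset (Fin n)) (hA : ∀ x ∈ A, ∀ y ∈ A, x ≠ y → v.rel x y ∨ v.rel y x) :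
    A.card < k := by
  by_contra hkc
  push_neg at hkc
  obtain ⟨B, hBA, hBcard⟩ := Finset.exists_subset_card_eq hkc
  obtain ⟨g, hgB, hginj, hgrel⟩ := exists_enum v k B hBcard
    (fun x hx y hy hxy => hA x (hBA hx) y (hBA hy) hxy)
  obtain ⟨a, b, hab, hnot⟩ := hf ⟨g, hginj⟩
  exact hnot (hsub _ _ (hgrel a b hab))

/-- Main deterministic step: if the tournament has no transitive subtournament of size `k`,
then any `α`-rationalization forces `n ≤ α * (k-1)`. -/
lemma rationalizable_bound {n k : ℕ} (f : TCoord n → Bool)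
    (hf : ∀ σ : Fin k ↪ Fin n, ∃ a b : Fin k, a < b ∧ ¬ rOf f (σ a) (σ b))
    (α : ℕ) (hrat : Rationalizable (MOf f) α) : n ≤ α * (k - 1) := by
  obtain ⟨V, ⟨hVne, hcons⟩, hral⟩ := hrat
  obtain ⟨v, hv⟩ := List.exists_mem_of_ne_nil V hVne
  have hlen : (0 : ℝ) < (V.length : ℝ) := by
    have : V.length ≠ 0 := fun h => hVne (List.length_eq_zero_iff.mp h)
    positivity
  have hsub : ∀ i j, v.rel i j → rOf f i j := by
    intro i j hij
    by_contra hr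
    have hne : i ≠ j := fun he => v.irrefl i (he ▸ hij)
    have h0 : MOf f i j = 0 := if_neg hr
    have hcount : (1 : ℕ) ≤ countVoters V (fun w => w.strong i j) := by
      unfold countVoters
      have hm : (1 : ℕ) ∈ V.map (fun w => if w.strong i j then 1 else 0) := by
        refine List.mem_map.mpr ⟨v, hv, ?_⟩
        simp [Voter.strong, hij]
      exact List.single_le_sum (fun x _ => Nat.zero_le x) _ hm
    have hdiv := (hcons i j hne).1
    rw [h0] at hdiv
    have hcount' : (1 : ℝ) ≤ (countVoters V (fun w => w.strong i j) : ℝ) := by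
      exact_mod_cast hcount
    have := div_pos (lt_of_lt_of_le one_pos hcount') hlen
    linarith
  classical
  set Cand : Fin n → Finset (Finset (Fin n)) := fun x =>
    Finset.univ.filter (fun A => x ∈ A ∧
      (∀ y ∈ A, ∀ z ∈ A, y ≠ z → v.rel y z ∨ v.rel z y) ∧
      ∀ y ∈ A, y = x ∨ v.rel y x) with hCand
  set h : Fin n → ℕ := fun x => (Cand x).sup Finset.card with hh
  have hmem_single : ∀ x : Fin n, {x} ∈ Cand x := by
    intro x
    rw [hCand, Finset.mem_filter]
    refine ⟨Finset.mem_univ _, Finset.mem_singleton_self x, ?_, ?_⟩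
    · intro y hy z hz hyz
      rw [Finset.mem_singleton] at hy hz
      exact absurd (hy.trans hz.symm) hyz
    · intro y hy
      exact Or.inl (Finset.mem_singleton.mp hy)
  have h_ge1 : ∀ x, 1 ≤ h x := by
    intro x
    have hle := Finset.le_sup (f := Finset.card) (hmem_single x)
    rw [Finset.card_singleton] at hle
    exact hle
  have h_le : ∀ x, h x ≤ k - 1 := by
    intro x
    apply Finset.sup_le
    intro A hA
    rw [hCand, Finset.mem_filter] at hA
    have := chain_card_lt f hf v hsub A hA.2.2.1
    omega
  have hkey : ∀ x y, v.rel x y → h x < h y := by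
    intro x y hxy
    obtain ⟨A, hA, hAs⟩ :=
      Finset.exists_mem_eq_sup (Cand x) ⟨{x}, hmem_single x⟩ Finset.card
    rw [hCand, Finset.mem_filter] at hA
    obtain ⟨-, hxA, hchain, hend⟩ := hA
    have hyA : y ∉ A := by
      intro hyA
      rcases hend y hyA with rfl | hr
      · exact v.irrefl _ hxy
      · exact v.irrefl _ (v.trans hr hxy)
    have hins : insert y A ∈ Cand y := by
      rw [hCand, Finset.mem_filter]
      refine ⟨Finset.mem_univ _, Finset.mem_insert_self _ _, ?_, ?_⟩
      · intro a ha b hb hab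
        rcases Finset.mem_insert.mp ha with rfl | ha'
        · rcases Finset.mem_insert.mp hb with rfl | hb'
          · exact absurd rfl hab
          · right
            rcases hend b hb' with rfl | hr
            · exact hxy
            · exact v.trans hr hxy
        · rcases Finset.mem_insert.mp hb with rfl | hb'
          · left
            rcases hend a ha' with rfl | hr
            · exact hxy
            · exact v.trans hr hxy
          · exact hchain a ha' b hb' hab
      · intro a ha
        rcases Finset.mem_insert.mp ha with rfl | ha'
        · exact Or.inl rfl
        · right
          rcases hend a ha' with rfl | hr
          · exact hxy
          · exact v.trans hr hxy
    have hsup : A.card + 1 ≤ h y := by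
      have hle := Finset.le_sup (f := Finset.card) hins
      rwa [Finset.card_insert_of_notMem hyA] at hle
    have hx : h x = A.card := hAs
    omega
  have cover : (Finset.univ : Finset (Fin n)) ⊆
      (Finset.Icc 1 (k - 1)).biUnion
        (fun m => Finset.univ.filter (fun x => h x = m)) := by
    intro x _
    exact Finset.mem_biUnion.mpr ⟨h x, Finset.mem_Icc.mpr ⟨h_ge1 x, h_le x⟩, by simp⟩
  have hbound : ∀ m, (Finset.univ.filter (fun x => h x = m)).card ≤ α := by
    intro m
    apply hral v hv
    intro a ha b hb hab
    rw [Finset.mem_filter] at ha hb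
    constructor
    · intro hr; have := hkey _ _ hr; omega
    · intro hr; have := hkey _ _ hr; omega
  calc n = (Finset.univ : Finset (Fin n)).card := (Finset.card_fin n).symm
    _ ≤ ((Finset.Icc 1 (k - 1)).biUnion
          (fun m => Finset.univ.filter (fun x => h x = m))).card :=
        Finset.card_le_card cover
    _ ≤ ∑ m ∈ Finset.Icc 1 (k - 1), (Finset.univ.filter (fun x => h x = m)).card :=
        Finset.card_biUnion_le
    _ ≤ ∑ _m ∈ Finset.Icc 1 (k - 1), α := Finset.sum_le_sum (fun m _ => hbound m)
    _ = (k - 1) * α := by rw [Finset.sum_const, smul_eq_mul, Nat.card_Icc]; congr 1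
    _ = α * (k - 1) := Nat.mul_comm _ _

/-- for all sufficiently large `n` there exists an integral preference
matrix on `n` candidates with rationality number at least `n / (2·log₂ n + 1)`. -/
theorem integral_lower_bound :
    ∃ n₀ : ℕ, ∀ n : ℕ, n₀ ≤ n →
      ∃ M : Fin n → Fin n → ℝ, IsPrefMatrix M ∧ Integral M ∧
        (n : ℝ) / (2 * Real.logb 2 n + 1) ≤ (rationalityNumber M : ℝ) := by
  refine ⟨2, fun n hn => ?_⟩
  have hn1 : (1 : ℝ) ≤ (n : ℝ) := by
    have : (2:ℕ) ≤ n := hn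
    exact_mod_cast le_trans (by norm_num) this
  have hnpos : (0 : ℝ) < (n : ℝ) := lt_of_lt_of_le one_pos hn1
  set L := Real.logb 2 n with hL
  have hL0 : 0 ≤ L := Real.logb_nonneg (by norm_num) hn1
  set k := ⌊2 * L⌋₊ + 2 with hk
  have hkfloor : (2 : ℝ) * L < ((⌊2 * L⌋₊ : ℕ) : ℝ) + 1 := Nat.lt_floor_add_one _
  have hnk : n ^ k < 2 ^ (k.choose 2) := by
    have h1 : (n : ℝ) < 2 ^ (((k : ℝ) - 1) / 2) := by
      have hrepr : (n : ℝ) = (2 : ℝ) ^ L := (Real.rpow_logb (by norm_num) (by norm_num) hnpos).symm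
      rw [hrepr]
      apply (Real.rpow_lt_rpow_left_iff (by norm_num)).mpr
      have hkc : (k : ℝ) = ((⌊2 * L⌋₊ : ℕ) : ℝ) + 2 := by rw [hk]; push_cast; ring
      rw [hkc]
      linarith
    have h2 : (n : ℝ) ^ k < ((2 : ℝ) ^ (((k : ℝ) - 1) / 2)) ^ k :=
      pow_lt_pow_left₀ h1 (le_of_lt hnpos) (by omega)
    have h3 : ((2 : ℝ) ^ (((k : ℝ) - 1) / 2)) ^ k = (2 : ℝ) ^ (k.choose 2 : ℕ) := by
      rw [← Real.rpow_natCast ((2 : ℝ) ^ (((k : ℝ) - 1) / 2)) k,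
        ← Real.rpow_natCast 2 (k.choose 2), ← Real.rpow_mul (by norm_num)]
      congr 1
      rw [Nat.cast_choose_two]
      ring
    have h4 : (n : ℝ) ^ k < (2 : ℝ) ^ (k.choose 2 : ℕ) := h3 ▸ h2
    exact_mod_cast h4
  obtain ⟨f, hf⟩ := exists_good_tournament n k hnk
  refine ⟨MOf f, MOf_pref f, MOf_integral f, ?_⟩
  have hSne : Rationalizable (MOf f) n :=
    rationalizable_card _ (MOf_pref f).2.1 (MOf_le_one f)
  have hmem : Rationalizable (MOf f) (rationalityNumber (MOf f)) := by
    have h' := Nat.sInf_mem (s := {α | Rationalizable (MOf f) α}) ⟨n, hSne⟩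
    exact h'
  have hb : n ≤ rationalityNumber (MOf f) * (k - 1) := rationalizable_bound f hf _ hmem
  set α := rationalityNumber (MOf f) with hα
  have hαnn : (0 : ℝ) ≤ (α : ℝ) := Nat.cast_nonneg _
  have htle : ((k - 1 : ℕ) : ℝ) ≤ 2 * L + 1 := by
    have h1 : (k - 1 : ℕ) = ⌊2 * L⌋₊ + 1 := by omega
    rw [h1]
    push_cast
    have := Nat.floor_le (by positivity : (0:ℝ) ≤ 2 * L)
    linarith
  have hpos : (0 : ℝ) < 2 * L + 1 := by linarith
  rw [div_le_iff₀ hpos]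
  calc (n : ℝ) ≤ (α : ℝ) * ((k - 1 : ℕ) : ℝ) := by exact_mod_cast hb
    _ ≤ (α : ℝ) * (2 * L + 1) := mul_le_mul_of_nonneg_left htle hαnn
    _ = (α : ℝ) * (2 * Real.logb 2 n + 1) := by rw [hL]
end

section
/- Every tournament on n ≥ 2 vertices has dichromatic number at most 3n / log₂ n; that is, its vertex set can be partitioned into at most 3n/log₂ n sets each inducing an acyclic subtournament. -/
open scoped Classical

section AuxTournament

open Finset

variable {n : ℕ} {r : Fin n → Fin n → Prop}

lemma AcyclicOn.congr {S S' : Set (Fin n)} (h : AcyclicOn r S)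
    (e : ∀ x, x ∈ S' ↔ x ∈ S) : AcyclicOn r S' := by
  intro x hx
  exact h x (Relation.TransGen.mono (p := fun a b => a ∈ S ∧ b ∈ S ∧ r a b)
    (fun a b hab => ⟨(e a).1 hab.1, (e b).1 hab.2.1, hab.2.2⟩) _ _ hx)

lemma acyclicOn_of_subsingleton (hirr : ∀ i, ¬ r i i) {S : Set (Fin n)}
    (hS : ∀ x ∈ S, ∀ y ∈ S, x = y) : AcyclicOn r S := by
  intro x hx
  cases hx with
  | single h => exact hirr x h.2.2
  | tail h1 h2 =>
    obtain ⟨hb, hx2, hr⟩ := h2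
    have e := hS _ hb _ hx2
    exact hirr x (e ▸ hr)

lemma acyclicOn_of_pairwise (hT : IsTournament r) {l : List (Fin n)}
    (hp : l.Pairwise r) : AcyclicOn r {x | x ∈ l} := by
  classical
  have key : ∀ a b : Fin n, (a ∈ {x | x ∈ l} ∧ b ∈ {x | x ∈ l} ∧ r a b) →
      l.idxOf a < l.idxOf b := by
    rintro a b ⟨ha, hb, hab⟩
    have ha' : a ∈ l := ha
    have hb' : b ∈ l := hb
    have hia : l.idxOf a < l.length := List.idxOf_lt_length_iff.2 ha'
    have hib : l.idxOf b < l.length := List.idxOf_lt_length_iff.2 hb'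
    have hne : a ≠ b := by rintro rfl; exact hT.1 a hab
    by_contra hle
    push_neg at hle
    rcases lt_or_eq_of_le hle with hlt | heq
    · have hba := List.pairwise_iff_get.1 hp ⟨_, hib⟩ ⟨_, hia⟩ hlt
      rw [List.idxOf_get hib, List.idxOf_get hia] at hba
      exact (hT.2 a b hne).1 hab hba
    · apply hne
      have e1 := List.idxOf_get hia
      have e2 := List.idxOf_get hib
      rw [← e1, ← e2]
      exact congrArg l.get (Fin.ext heq.symm)
  intro x hx
  have htg : Relation.TransGen (fun a b => l.idxOf a < l.idxOf b) x x :=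
    Relation.TransGen.mono (p := fun a b => l.idxOf a < l.idxOf b) (fun a b hab => key a b hab) _ _ hx
  haveI : IsTrans (Fin n) (fun a b => l.idxOf a < l.idxOf b) := ⟨fun _ _ _ h1 h2 => h1.trans h2⟩
  rw [Relation.transGen_eq_self] at htg
  exact lt_irrefl _ htg

lemma exists_transitive_list (hT : IsTournament r) (s : Finset (Fin n)) :
    ∃ l : List (Fin n), (∀ x ∈ l, x ∈ s) ∧ l.Pairwise r ∧ s.card < 2 ^ l.length := by
  classical
  induction s using Finset.strongInductionOn with
  | _ s ih =>
    rcases s.eq_empty_or_nonempty with rfl | ⟨v, hv⟩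
    · exact ⟨[], by simp, List.Pairwise.nil, by simp⟩
    · set A := (s.erase v).filter (fun x => r v x) with hA
      set B := (s.erase v).filter (fun x => ¬ r v x) with hB
      have hAB : A.card + B.card = s.card - 1 := by
        rw [hA, hB, Finset.card_filter_add_card_filter_not,
          Finset.card_erase_of_mem hv]
      have hcard : 1 ≤ s.card := Finset.card_pos.2 ⟨v, hv⟩
      by_cases hc : B.card ≤ A.card
      · have hss : A ⊂ s :=
          Finset.ssubset_of_subset_of_ssubset (Finset.filter_subset _ _)
            (Finset.erase_ssubset hv)
        obtain ⟨l', hmem, hpw, hlc⟩ := ih A hss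
        refine ⟨v :: l', ?_, ?_, ?_⟩
        · intro x hx
          rcases List.mem_cons.1 hx with rfl | hx'
          · exact hv
          · exact (Finset.erase_subset _ _) (Finset.filter_subset _ _ (hmem x hx'))
        · refine List.pairwise_cons.2 ⟨fun x hx => ?_, hpw⟩
          exact (Finset.mem_filter.1 (hmem x hx)).2
        · simp only [List.length_cons, pow_succ]
          omega
      · push_neg at hc
        have hss : B ⊂ s :=
          Finset.ssubset_of_subset_of_ssubset (Finset.filter_subset _ _)
            (Finset.erase_ssubset hv)
        obtain ⟨l', hmem, hpw, hlc⟩ := ih B hss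
        refine ⟨l' ++ [v], ?_, ?_, ?_⟩
        · intro x hx
          rcases List.mem_append.1 hx with hx' | hx'
          · exact (Finset.erase_subset _ _) (Finset.filter_subset _ _ (hmem x hx'))
          · rcases List.mem_singleton.1 hx' with rfl
            exact hv
        · refine List.pairwise_append.2 ⟨hpw, List.pairwise_singleton _ _, ?_⟩
          intro a ha b hb
          rcases List.mem_singleton.1 hb with rfl
          have haB := Finset.mem_filter.1 (hmem a ha)
          have hane : a ≠ b := (Finset.mem_erase.1 haB.1).1
          exact (hT.2 a b hane).2 haB.2
        · rw [List.length_append, List.length_singleton, pow_succ]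
          omega

lemma exists_coloring (hT : IsTournament r) (T : ℕ) (hT1 : 1 ≤ T) (s : Finset (Fin n)) :
    ∃ (k : ℕ) (c : Fin n → ℕ), (∀ x ∈ s, c x < k) ∧
      (∀ j : ℕ, AcyclicOn r {x | x ∈ s ∧ c x = j}) ∧
      k ≤ s.card / (Nat.log 2 T + 1) + (T - 1) := by
  classical
  induction s using Finset.strongInductionOn with
  | _ s ih =>
    by_cases hsmall : s.card < T
    · refine ⟨s.card, fun x => if h : x ∈ s then ((s.equivFin ⟨x, h⟩ : Fin s.card) : ℕ)
        else 0, ?_, ?_, ?_⟩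
      · intro x hx
        simp only [dif_pos hx]
        exact (s.equivFin ⟨x, hx⟩).isLt
      · intro j
        apply acyclicOn_of_subsingleton hT.1
        rintro x ⟨hx, hcx⟩ y ⟨hy, hcy⟩
        simp only [dif_pos hx] at hcx
        simp only [dif_pos hy] at hcy
        have hval : ((s.equivFin ⟨x, hx⟩ : Fin s.card) : ℕ)
            = ((s.equivFin ⟨y, hy⟩ : Fin s.card) : ℕ) := by omega
        have := s.equivFin.injective (Fin.ext hval)
        exact congrArg Subtype.val (by exact this)
      · have := Nat.zero_le (s.card / (Nat.log 2 T + 1))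
        omega
    · push_neg at hsmall
      obtain ⟨l, hlmem, hlpw, hlcard⟩ := exists_transitive_list hT s
      set L := Nat.log 2 T + 1 with hL
      have hlen : L ≤ l.length := by
        have h1 : Nat.log 2 T ≤ Nat.log 2 s.card := Nat.log_mono_right hsmall
        have h2 : Nat.log 2 s.card < l.length := by
          by_contra hle
          push_neg at hle
          have hp1 := Nat.pow_log_le_self 2 (show s.card ≠ 0 by omega)
          have hp2 := Nat.pow_le_pow_right (by norm_num : 1 ≤ 2) hle
          omega
        omega
      have hnodup : l.Nodup := hlpw.imp (fun {a b} (hab : r a b) (h : a = b) => hT.1 b (h ▸ hab))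
      set t := l.toFinset with ht
      have htcard : t.card = l.length := List.toFinset_card_of_nodup hnodup
      have htsub : t ⊆ s := fun x hx => hlmem x (List.mem_toFinset.1 hx)
      have htne : t.Nonempty := by
        rw [← Finset.card_pos, htcard]; omega
      have hss : s \ t ⊂ s := Finset.sdiff_ssubset htsub htne
      obtain ⟨k', c', hc1, hc2, hc3⟩ := ih _ hss
      refine ⟨k' + 1, fun x => if x ∈ t then k' else c' x, ?_, ?_, ?_⟩
      · intro x hx
        by_cases h : x ∈ t
        · simp [h]
        · simp only [if_neg h]
          exact Nat.lt_succ_of_lt (hc1 x (Finset.mem_sdiff.2 ⟨hx, h⟩))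
      · intro j
        by_cases hj : j = k'
        · subst hj
          refine (acyclicOn_of_pairwise hT hlpw).congr ?_
          intro x
          simp only [Set.mem_setOf_eq]
          constructor
          · rintro ⟨hxs, hxc⟩
            by_cases h : x ∈ t
            · exact List.mem_toFinset.1 h
            · rw [if_neg h] at hxc
              exact absurd hxc (Nat.ne_of_lt (hc1 x (Finset.mem_sdiff.2 ⟨hxs, h⟩)))
          · intro hxl
            have h : x ∈ t := List.mem_toFinset.2 hxl
            exact ⟨htsub h, if_pos h⟩
        · refine (hc2 j).congr ?_
          intro x
          simp only [Set.mem_setOf_eq, Finset.mem_sdiff]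
          constructor
          · rintro ⟨hxs, hxc⟩
            by_cases h : x ∈ t
            · rw [if_pos h] at hxc
              exact absurd hxc.symm hj
            · rw [if_neg h] at hxc
              exact ⟨⟨hxs, h⟩, hxc⟩
          · rintro ⟨⟨hxs, hxt⟩, hxc⟩
            exact ⟨hxs, by rw [if_neg hxt]; exact hxc⟩
      · have hls : l.length ≤ s.card := by
          rw [← htcard]; exact Finset.card_le_card htsub
        have hcard' : (s \ t).card = s.card - l.length := by
          rw [Finset.card_sdiff_of_subset htsub, htcard]
        rw [hcard'] at hc3
        have key : (s.card - l.length) / L + 1 ≤ s.card / L := by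
          have h1 : (s.card - l.length) + L ≤ s.card := by omega
          calc (s.card - l.length) / L + 1 = ((s.card - l.length) + L) / L :=
                (Nat.add_div_right _ (by omega)).symm
            _ ≤ s.card / L := Nat.div_le_div_right h1
        omega

end AuxTournament

lemma aux_E (e : ℕ) (he : 2 ≤ e) : 2 * e + 3 ≤ 2 ^ (e + 1) := by
  induction e with
  | zero => omega
  | succ m ih =>
    rcases Nat.lt_or_ge m 2 with h | h
    · interval_cases m
      · omega
      · norm_num
    · have h1 := ih (by omega)
      have h2 : (2:ℕ) ^ 1 ≤ 2 ^ (m + 1) := Nat.pow_le_pow_right (by norm_num) (by omega)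
      rw [pow_succ]
      omega

lemma aux_podd (e : ℕ) : (2 * e + 1) * (2 ^ e - 1) ≤ 2 ^ (2 * e) := by
  rcases Nat.lt_or_ge e 3 with h | h
  · interval_cases e <;> norm_num
  · have h1 : 2 * e + 1 ≤ 2 ^ e := by
      have h2 := aux_E (e - 1) (by omega)
      have h3 : e - 1 + 1 = e := by omega
      rw [h3] at h2
      omega
    calc (2 * e + 1) * (2 ^ e - 1) ≤ 2 ^ e * 2 ^ e :=
          Nat.mul_le_mul h1 (Nat.sub_le _ _)
      _ = 2 ^ (2 * e) := by rw [two_mul, pow_add]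

lemma aux_N1 (c : ℕ) (hc : 2 ≤ c) : c * (2 ^ ((c - 1) / 2) - 1) ≤ 2 ^ (c - 1) := by
  set e := (c - 1) / 2 with he
  have hce : c = 2 * e + 1 ∨ c = 2 * e + 2 := by omega
  rcases hce with h | h
  · have h1 : c - 1 = 2 * e := by omega
    rw [h1, h]
    exact aux_podd e
  · have h1 : c - 1 = 2 * e + 1 := by omega
    rw [h1, h]
    calc (2 * e + 2) * (2 ^ e - 1) ≤ (2 * (2 * e + 1)) * (2 ^ e - 1) :=
          Nat.mul_le_mul (by omega) (le_refl _)
      _ = 2 * ((2 * e + 1) * (2 ^ e - 1)) := by ring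
      _ ≤ 2 * 2 ^ (2 * e) := Nat.mul_le_mul (le_refl 2) (aux_podd e)
      _ = 2 ^ (2 * e + 1) := by rw [pow_succ]; ring

/-- every tournament on `n ≥ 2` vertices has dichromatic number at most
`3n / log₂ n`. -/
theorem tournament_dichromatic_upper_bound {n : ℕ} (hn : 2 ≤ n)
    (r : Fin n → Fin n → Prop) (hT : IsTournament r) :
    (dichromaticNumber r : ℝ) ≤ 3 * n / Real.logb 2 n := by
    classical
  set a := Nat.log 2 n with ha
  have ha1 : 1 ≤ a := Nat.log_pos (by norm_num) hn
  set c := a + 1 with hcdef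
  set d := (c + 1) / 2 with hddef
  set m := d - 1 with hmdef
  have hd1 : 1 ≤ d := by omega
  have hLT : Nat.log 2 (2 ^ m) + 1 = d := by
    rw [Nat.log_pow (by norm_num : 1 < 2)]
    omega
  obtain ⟨k, col, hcol, hacy, hk⟩ := exists_coloring hT (2 ^ m)
    (Nat.one_le_pow _ _ (by norm_num)) Finset.univ
  rw [hLT] at hk
  have hcardu : (Finset.univ : Finset (Fin n)).card = n := by
    simp [Finset.card_univ]
  rw [hcardu] at hk
  -- dichromaticNumber ≤ k
  have hk1 : 1 ≤ k := by
    have x0 : (⟨0, by omega⟩ : Fin n) ∈ Finset.univ := Finset.mem_univ _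
    have := hcol _ x0
    omega
  have hdle : dichromaticNumber r ≤ k := by
    apply Nat.sInf_le
    refine ⟨fun x => ⟨col x, hcol x (Finset.mem_univ x)⟩, ?_⟩
    intro mm
    refine (hacy (mm : ℕ)).congr ?_
    intro x
    simp [Set.mem_setOf_eq, Fin.ext_iff]
  -- numeric facts
  have h2a : 2 ^ a ≤ n := Nat.pow_log_le_self 2 (by omega)
  have h2c : n < 2 ^ c := Nat.lt_pow_succ_log_self (by norm_num) n
  have hmc : m = (c - 1) / 2 := by omega
  have hcn : c * (2 ^ m - 1) ≤ n := by
    have hca : c - 1 = a := by omega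
    calc c * (2 ^ m - 1) = c * (2 ^ ((c - 1) / 2) - 1) := by rw [hmc]
      _ ≤ 2 ^ (c - 1) := aux_N1 c (by omega)
      _ = 2 ^ a := by rw [hca]
      _ ≤ n := h2a
  have hc2d : c ≤ 2 * d := by omega
  have hd0 : (0:ℝ) < (d:ℝ) := by exact_mod_cast hd1
  have hc0 : (0:ℝ) < (c:ℝ) := by positivity
  have hn0 : (0:ℝ) ≤ (n:ℝ) := by positivity
  -- cast the coloring bound
  have hkR : (k : ℝ) ≤ (n : ℝ) / (d : ℝ) + ((2:ℝ) ^ m - 1) := by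
    have h1 : ((n / d : ℕ) : ℝ) ≤ (n : ℝ) / (d : ℝ) := Nat.cast_div_le
    have h3 : (((2 ^ m - 1 : ℕ)) : ℝ) = (2:ℝ) ^ m - 1 := by
      rw [Nat.cast_sub (Nat.one_le_pow _ _ (by norm_num))]
      push_cast
      ring
    have h2 : (k : ℝ) ≤ ((n / d : ℕ) : ℝ) + (((2 ^ m - 1 : ℕ)) : ℝ) := by
      exact_mod_cast hk
    rw [h3] at h2
    linarith
  -- n/d + (2^m - 1) ≤ 3n/c
  have e1 : (n : ℝ) / (d : ℝ) ≤ 2 * (n : ℝ) / (c : ℝ) := by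
    rw [div_le_div_iff₀ hd0 hc0]
    have hcast : (c : ℝ) ≤ 2 * (d : ℝ) := by exact_mod_cast hc2d
    nlinarith
  have e2 : ((2:ℝ) ^ m - 1) ≤ (n : ℝ) / (c : ℝ) := by
    rw [le_div_iff₀ hc0]
    have hcast : (c : ℝ) * ((2:ℝ) ^ m - 1) ≤ (n : ℝ) := by
      have := hcn
      have h3 : (((2 ^ m - 1 : ℕ)) : ℝ) = (2:ℝ) ^ m - 1 := by
        rw [Nat.cast_sub (Nat.one_le_pow _ _ (by norm_num))]
        push_cast
        ring
      calc (c : ℝ) * ((2:ℝ) ^ m - 1) = ((c * (2 ^ m - 1) : ℕ) : ℝ) := by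
            rw [Nat.cast_mul, h3]
        _ ≤ (n : ℝ) := by exact_mod_cast hcn
    linarith
  have hmid : (n : ℝ) / (d : ℝ) + ((2:ℝ) ^ m - 1) ≤ 3 * (n : ℝ) / (c : ℝ) := by
    have : 2 * (n : ℝ) / (c : ℝ) + (n : ℝ) / (c : ℝ) = 3 * (n : ℝ) / (c : ℝ) := by
      ring
    linarith
  -- 3n/c ≤ 3n/logb 2 n
  have hn1 : (1:ℝ) < (n:ℝ) := by exact_mod_cast hn
  have hlb_pos : 0 < Real.logb 2 n := Real.logb_pos (by norm_num) hn1
  have hlb_le : Real.logb 2 (n:ℝ) ≤ (c : ℝ) := by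
    have hle : (n : ℝ) ≤ (2:ℝ) ^ c := by
      have := h2c.le
      exact_mod_cast this
    calc Real.logb 2 (n:ℝ) ≤ Real.logb 2 ((2:ℝ) ^ c) :=
          Real.logb_le_logb_of_le (by norm_num) (by linarith) hle
      _ = (c : ℝ) := by
          rw [Real.logb_pow, Real.logb_self_eq_one (by norm_num)]
          ring
  have hfin : 3 * (n : ℝ) / (c : ℝ) ≤ 3 * (n : ℝ) / Real.logb 2 n := by
    gcongr
  have hdk : (dichromaticNumber r : ℝ) ≤ (k : ℝ) := by exact_mod_cast hdle
  linarith
end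

section
/- Let n ≥ 2 and k ≥ 2 be integers with n ≤ 2^{(k-1)/2}. Then there exists a tournament on n vertices containing no acyclic (transitive) subtournament on k vertices. Consequently, for sufficiently large n there exists a tournament on n vertices with dichromatic number at least n/(2·log₂ n + 1). -/
open scoped Classical

section AuxTDLB

open Finset

lemma aux_acyclicOn_mono {C : Type} {r : C → C → Prop} {S T : Set C} (h : S ⊆ T)
    (hT : AcyclicOn r T) : AcyclicOn r S := by
  intro x hx
  exact hT x (Relation.TransGen.mono (fun a b hab => ⟨h hab.1, h hab.2.1, hab.2.2⟩) x x hx)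

lemma aux_tournament_total {C : Type} {r : C → C → Prop} (hr : IsTournament r)
    {i j : C} (hij : i ≠ j) : r i j ∨ r j i := by
  by_cases h : r i j
  · exact Or.inl h
  · exact Or.inr ((hr.2 j i hij.symm).mpr h)

lemma aux_tsort {n k : ℕ} {r : Fin n → Fin n → Prop} (hr : IsTournament r) (S : Finset (Fin n))
    (hS : S.card = k) (hA : AcyclicOn r ↑S) :
    ∃ σ : Fin k ↪ Fin n, (∀ a, σ a ∈ S) ∧ ∀ a b : Fin k, a < b → r (σ a) (σ b) := by
  classical
  set t : Fin n → Fin n → Prop := fun x y =>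
    Relation.TransGen (fun x y => x ∈ (↑S : Set (Fin n)) ∧ y ∈ (↑S : Set (Fin n)) ∧ r x y) x y
    with ht
  have tirr : ∀ a : Fin n, ¬ t a a := fun a h => hA a h
  have ttrans : ∀ {a b c : Fin n}, t a b → t b c → t a c := fun h1 h2 => h1.trans h2
  have ttot : ∀ a b : Fin n, a ∈ S → b ∈ S → a ≠ b → t a b ∨ t b a := by
    intro a b haS hbS hab
    rcases aux_tournament_total hr hab with h | h
    · exact Or.inl (Relation.TransGen.single
        ⟨Finset.mem_coe.mpr haS, Finset.mem_coe.mpr hbS, h⟩)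
    · exact Or.inr (Relation.TransGen.single
        ⟨Finset.mem_coe.mpr hbS, Finset.mem_coe.mpr haS, h⟩)
  set le : ↥S → ↥S → Prop := fun a b => a = b ∨ t ↑a ↑b with hle
  haveI : DecidableRel le := fun a b => Classical.dec _
  haveI : Std.Total le := ⟨fun a b => by
    by_cases h : a = b
    · exact Or.inl (Or.inl h)
    · rcases ttot ↑a ↑b a.2 b.2 (fun hh => h (Subtype.ext hh)) with h' | h'
      exacts [Or.inl (Or.inr h'), Or.inr (Or.inr h')]⟩
  haveI : IsTrans ↥S le := ⟨by
    rintro a b c (rfl | h1) h2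
    · exact h2
    · rcases h2 with rfl | h2
      · exact Or.inr h1
      · exact Or.inr (ttrans h1 h2)⟩
  set l : List ↥S := (Finset.univ : Finset ↥S).toList.insertionSort le with hl
  have hsort : l.Pairwise le := List.pairwise_insertionSort le _
  have hperm : l.Perm (Finset.univ : Finset ↥S).toList := List.perm_insertionSort le _
  have hnodup : l.Nodup := hperm.nodup_iff.mpr (Finset.nodup_toList _)
  have hlen : l.length = k := by
    rw [hperm.length_eq, Finset.length_toList, Finset.card_univ, Fintype.card_coe, hS]
  have hgetinj : Function.Injective l.get := List.nodup_iff_injective_get.mp hnodup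
  refine ⟨⟨fun a => ↑(l.get (Fin.cast hlen.symm a)), ?_⟩, ?_, ?_⟩
  · intro a b hab
    have h1 : l.get (Fin.cast hlen.symm a) = l.get (Fin.cast hlen.symm b) := Subtype.ext hab
    have h2 := hgetinj h1
    have h3 : (Fin.cast hlen.symm a : ℕ) = (Fin.cast hlen.symm b : ℕ) := congrArg Fin.val h2
    exact Fin.ext (by simpa only [Fin.coe_cast] using h3)
  · intro a
    exact (l.get (Fin.cast hlen.symm a)).2
  · intro a b hab
    have hab' : (Fin.cast hlen.symm a) < (Fin.cast hlen.symm b) := hab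
    have hrel : le (l.get (Fin.cast hlen.symm a)) (l.get (Fin.cast hlen.symm b)) :=
      hsort.rel_get_of_lt hab'
    have hne : l.get (Fin.cast hlen.symm a) ≠ l.get (Fin.cast hlen.symm b) := by
      intro h
      have := congrArg Fin.val (hgetinj h)
      simp only [Fin.coe_cast] at this
      exact absurd (Fin.ext this) (ne_of_lt hab)
    have htab : t ↑(l.get (Fin.cast hlen.symm a)) ↑(l.get (Fin.cast hlen.symm b)) :=
      hrel.resolve_left hne
    by_contra hcon
    have hnecoe : (↑(l.get (Fin.cast hlen.symm a)) : Fin n)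
        ≠ ↑(l.get (Fin.cast hlen.symm b)) := fun h => hne (Subtype.ext h)
    have hba : r ↑(l.get (Fin.cast hlen.symm b)) ↑(l.get (Fin.cast hlen.symm a)) := by
      rcases aux_tournament_total hr hnecoe with h | h
      · exact absurd h hcon
      · exact h
    have hcyc : t ↑(l.get (Fin.cast hlen.symm a)) ↑(l.get (Fin.cast hlen.symm a)) :=
      ttrans htab (Relation.TransGen.single
        ⟨Finset.mem_coe.mpr (l.get (Fin.cast hlen.symm b)).2,
         Finset.mem_coe.mpr (l.get (Fin.cast hlen.symm a)).2, hba⟩)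
    exact tirr _ hcyc

lemma aux_card_agree {A : Type} [Fintype A] [DecidableEq A] (P : Finset A) (g : A → Bool) :
    Fintype.card {f : A → Bool // ∀ p ∈ P, f p = g p} = 2 ^ (Fintype.card A - P.card) := by
  classical
  have e : {f : A → Bool // ∀ p ∈ P, f p = g p} ≃ ({a : A // a ∉ P} → Bool) :=
    { toFun := fun f a => f.1 a.1
      invFun := fun h => ⟨fun a => if ha : a ∈ P then g a else h ⟨a, ha⟩,
        fun p hp => by simp [hp]⟩
      left_inv := fun f => Subtype.ext (funext fun a => by
        by_cases ha : a ∈ P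
        · simp [ha, f.2 a ha]
        · simp [ha])
      right_inv := fun h => funext fun a => by simp [a.2] }
  rw [Fintype.card_congr e, Fintype.card_fun, Fintype.card_bool,
    Fintype.card_subtype_compl, Fintype.card_coe]

lemma aux_card_Q (k : ℕ) :
    (Finset.univ.filter fun q : Fin k × Fin k => q.1 < q.2).card = k * (k - 1) / 2 := by
  classical
  have hswapset : (Finset.univ.filter fun q : Fin k × Fin k => q.2 < q.1)
      = (Finset.univ.filter fun q : Fin k × Fin k => q.1 < q.2).image Prod.swap := by
    ext ⟨a, b⟩
    simp only [Finset.mem_filter, Finset.mem_univ, true_and, Finset.mem_image]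
    constructor
    · intro h
      exact ⟨(b, a), h, rfl⟩
    · rintro ⟨⟨x, y⟩, hxy, h⟩
      simp only [Prod.swap_prod_mk, Prod.mk.injEq] at h
      obtain ⟨rfl, rfl⟩ := h
      exact hxy
  have hswap : (Finset.univ.filter fun q : Fin k × Fin k => q.1 < q.2).card
      = (Finset.univ.filter fun q : Fin k × Fin k => q.2 < q.1).card := by
    rw [hswapset, Finset.card_image_of_injective _ Prod.swap_injective]
  have hdiag : (Finset.univ.filter fun q : Fin k × Fin k => q.1 = q.2)
      = Finset.univ.image (fun i : Fin k => (i, i)) := by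
    ext ⟨a, b⟩
    simp only [Finset.mem_filter, Finset.mem_univ, true_and, Finset.mem_image, Prod.mk.injEq]
    constructor
    · rintro rfl
      exact ⟨a, rfl, rfl⟩
    · rintro ⟨i, rfl, rfl⟩
      rfl
  have hdiagcard : (Finset.univ.filter fun q : Fin k × Fin k => q.1 = q.2).card = k := by
    rw [hdiag, Finset.card_image_of_injective _ (fun i j h => congrArg Prod.fst h)]
    simp
  have hsplit : (Finset.univ.filter fun q : Fin k × Fin k => q.1 = q.2).card
      + (Finset.univ.filter fun q : Fin k × Fin k => ¬ q.1 = q.2).card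
      = (Finset.univ : Finset (Fin k × Fin k)).card := by
    simpa using Finset.card_filter_add_card_filter_not
      (s := (Finset.univ : Finset (Fin k × Fin k))) (p := fun q => q.1 = q.2)
  have huniv : (Finset.univ : Finset (Fin k × Fin k)).card = k * k := by
    simp [Fintype.card_prod]
  have hnesplit : (Finset.univ.filter fun q : Fin k × Fin k => ¬ q.1 = q.2)
      = (Finset.univ.filter fun q : Fin k × Fin k => q.1 < q.2)
        ∪ (Finset.univ.filter fun q : Fin k × Fin k => q.2 < q.1) := by
    rw [← Finset.filter_or]
    apply Finset.filter_congr
    intro q _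
    constructor
    · intro h
      exact lt_or_gt_of_ne h
    · intro h
      rcases h with h | h
      · exact ne_of_lt h
      · exact (ne_of_lt h).symm
  have hdisj : Disjoint (Finset.univ.filter fun q : Fin k × Fin k => q.1 < q.2)
      (Finset.univ.filter fun q : Fin k × Fin k => q.2 < q.1) := by
    rw [Finset.disjoint_left]
    intro q h1 h2
    exact absurd ((Finset.mem_filter.mp h2).2) (asymm (Finset.mem_filter.mp h1).2)
  have hcardsum : (Finset.univ.filter fun q : Fin k × Fin k => ¬ q.1 = q.2).card
      = (Finset.univ.filter fun q : Fin k × Fin k => q.1 < q.2).card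
        + (Finset.univ.filter fun q : Fin k × Fin k => q.2 < q.1).card := by
    rw [hnesplit, Finset.card_union_of_disjoint hdisj]
  have hm : k * (k - 1) + k = k * k := by
    cases k with
    | zero => rfl
    | succ m => rw [Nat.succ_sub_one]; ring
  rw [huniv, hdiagcard, hcardsum, ← hswap] at hsplit
  omega

def auxROf {n : ℕ} (f : Fin n × Fin n → Bool) : Fin n → Fin n → Prop :=
  fun i j => i ≠ j ∧ (if i < j then f (i, j) = true else f (j, i) = false)

lemma auxROf_lt {n : ℕ} (f : Fin n × Fin n → Bool) {i j : Fin n} (h : i < j) :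
    (auxROf f i j ↔ f (i, j) = true) ∧ (auxROf f j i ↔ f (i, j) = false) := by
  constructor
  · simp [auxROf, ne_of_lt h, if_pos h]
  · simp [auxROf, (ne_of_lt h).symm, if_neg (asymm h)]

lemma auxROf_tournament {n : ℕ} (f : Fin n × Fin n → Bool) : IsTournament (auxROf f) := by
  constructor
  · intro i h
    exact h.1 rfl
  · intro i j hij
    rcases lt_or_gt_of_ne hij with h | h
    · rw [(auxROf_lt f h).1, (auxROf_lt f h).2]
      cases f (i, j) <;> simp
    · rw [(auxROf_lt f h).2, (auxROf_lt f h).1]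
      cases f (j, i) <;> simp

lemma aux_exists_tournament (n k : ℕ) (hn : 2 ≤ n) (hk : 2 ≤ k)
    (h : (n : ℝ) ≤ (2 : ℝ) ^ (((k : ℝ) - 1) / 2)) :
    ∃ r : Fin n → Fin n → Prop, IsTournament r ∧
      ∀ S : Finset (Fin n), S.card = k → ¬ AcyclicOn r ↑S := by
  classical
  set K := k * (k - 1) / 2 with hKdef
  have hdvd : 2 ∣ k * (k - 1) := by
    rcases Nat.even_or_odd k with he | ho
    · exact Dvd.dvd.mul_right he.two_dvd _
    · exact Dvd.dvd.mul_left (Nat.Odd.sub_odd ho odd_one).two_dvd _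
  have hKK : K * 2 = k * (k - 1) := Nat.div_mul_cancel hdvd
  have hk1 : (1 : ℕ) ≤ k := by omega
  have hKr : (K : ℝ) * 2 = (k : ℝ) * ((k : ℝ) - 1) := by
    calc (K : ℝ) * 2 = ((K * 2 : ℕ) : ℝ) := by push_cast; ring
      _ = ((k * (k - 1) : ℕ) : ℝ) := by rw [hKK]
      _ = (k : ℝ) * ((k : ℝ) - 1) := by
          rw [Nat.cast_mul, Nat.cast_sub hk1, Nat.cast_one]
  have hpow : n ^ k ≤ 2 ^ K := by
    have h1 : ((n : ℝ)) ^ k ≤ ((2 : ℝ) ^ (((k : ℝ) - 1) / 2)) ^ k :=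
      pow_le_pow_left₀ (by positivity) h k
    have h2 : ((2 : ℝ) ^ (((k : ℝ) - 1) / 2)) ^ k = (2 : ℝ) ^ (K : ℝ) := by
      rw [← Real.rpow_natCast ((2 : ℝ) ^ (((k : ℝ) - 1) / 2)) k,
        ← Real.rpow_mul (by norm_num : (0:ℝ) ≤ 2)]
      congr 1
      nlinarith [hKr]
    have h3 : (2 : ℝ) ^ (K : ℝ) = ((2 ^ K : ℕ) : ℝ) := by
      rw [Real.rpow_natCast]; push_cast; ring
    have h4 : ((n ^ k : ℕ) : ℝ) ≤ ((2 ^ K : ℕ) : ℝ) := by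
      push_cast
      calc ((n : ℝ)) ^ k ≤ _ := h1
        _ = ((2 ^ K : ℕ) : ℝ) := by rw [h2, h3]
        _ = (2 : ℝ) ^ K := by push_cast; ring
    exact_mod_cast h4
  have hdesc : n.descFactorial k < n ^ k := by
    obtain ⟨m, rfl⟩ : ∃ m, n = m + 1 := ⟨n - 1, by omega⟩
    obtain ⟨l, rfl⟩ : ∃ l, k = l + 1 := ⟨k - 1, by omega⟩
    rw [Nat.succ_descFactorial_succ]
    calc (m + 1) * m.descFactorial l ≤ (m + 1) * m ^ l :=
          Nat.mul_le_mul_left _ (Nat.descFactorial_le_pow m l)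
      _ < (m + 1) * (m + 1) ^ l := by
          have hml : m ^ l < (m + 1) ^ l := Nat.pow_lt_pow_left (by omega) (by omega)
          exact mul_lt_mul_of_pos_left hml (by omega)
      _ = (m + 1) ^ (l + 1) := by ring
  have hcardF : Fintype.card (Fin n × Fin n → Bool) = 2 ^ (n * n) := by
    rw [Fintype.card_fun, Fintype.card_bool, Fintype.card_prod, Fintype.card_fin]
  -- per-σ count
  have hσcount : ∀ σ : Fin k ↪ Fin n,
      (Finset.univ.filter fun f : Fin n × Fin n → Bool =>
        ∀ a b : Fin k, a < b → auxROf f (σ a) (σ b)).card = 2 ^ (n * n - K) := by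
    intro σ
    set c : Fin k × Fin k → Fin n × Fin n :=
      fun q => if σ q.1 < σ q.2 then (σ q.1, σ q.2) else (σ q.2, σ q.1) with hcdef
    set v : Fin k × Fin k → Bool := fun q => if σ q.1 < σ q.2 then true else false with hvdef
    set Q : Finset (Fin k × Fin k) := Finset.univ.filter (fun q => q.1 < q.2) with hQdef
    have hkey : ∀ (f : Fin n × Fin n → Bool) (q : Fin k × Fin k), q.1 ≠ q.2 →
        (auxROf f (σ q.1) (σ q.2) ↔ f (c q) = v q) := by
      intro f q hq
      have hne : σ q.1 ≠ σ q.2 := fun hh => hq (σ.injective hh)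
      rcases lt_or_gt_of_ne hne with hlt | hlt
      · simp only [hcdef, hvdef, if_pos hlt]
        exact (auxROf_lt f hlt).1
      · simp only [hcdef, hvdef, if_neg (asymm hlt)]
        exact (auxROf_lt f hlt).2
    have hinj : Set.InjOn c ↑Q := by
      intro q hq q' hq' hcc
      have h1 : q.1 < q.2 := by
        have := Finset.mem_coe.mp hq
        rw [hQdef, Finset.mem_filter] at this
        exact this.2
      have h2 : q'.1 < q'.2 := by
        have := Finset.mem_coe.mp hq'
        rw [hQdef, Finset.mem_filter] at this
        exact this.2
      have hne : σ q.1 ≠ σ q.2 := fun hh => (ne_of_lt h1) (σ.injective hh)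
      have hne' : σ q'.1 ≠ σ q'.2 := fun hh => (ne_of_lt h2) (σ.injective hh)
      rcases lt_or_gt_of_ne hne with ha | ha <;> rcases lt_or_gt_of_ne hne' with hb | hb
      · rw [hcdef] at hcc
        simp only [if_pos ha, if_pos hb, Prod.mk.injEq] at hcc
        exact Prod.ext (σ.injective hcc.1) (σ.injective hcc.2)
      · rw [hcdef] at hcc
        simp only [if_pos ha, if_neg (asymm hb), Prod.mk.injEq] at hcc
        have e1 : q.1 = q'.2 := σ.injective hcc.1
        have e2 : q.2 = q'.1 := σ.injective hcc.2
        exact absurd (h1.trans (e2 ▸ h2)) (by rw [e1]; exact lt_irrefl _)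
      · rw [hcdef] at hcc
        simp only [if_neg (asymm ha), if_pos hb, Prod.mk.injEq] at hcc
        have e1 : q.2 = q'.1 := σ.injective hcc.1
        have e2 : q.1 = q'.2 := σ.injective hcc.2
        exact absurd (h2.trans (e2 ▸ h1)) (by rw [e1]; exact lt_irrefl _)
      · rw [hcdef] at hcc
        simp only [if_neg (asymm ha), if_neg (asymm hb), Prod.mk.injEq] at hcc
        exact Prod.ext (σ.injective hcc.2) (σ.injective hcc.1)
    have hQcard : Q.card = K := by rw [hQdef, aux_card_Q k]
    set P : Finset (Fin n × Fin n) := Q.image c with hPdef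
    have hPcard : P.card = K := by
      rw [hPdef, Finset.card_image_of_injOn hinj, hQcard]
    set g : Fin n × Fin n → Bool := fun p =>
      if h : ∃ q, q ∈ Q ∧ c q = p then v h.choose else true with hgdef
    have hg : ∀ q ∈ Q, g (c q) = v q := by
      intro q hq
      have hex : ∃ q', q' ∈ Q ∧ c q' = c q := ⟨q, hq, rfl⟩
      have : g (c q) = v hex.choose := by
        rw [hgdef]
        exact dif_pos hex
      rw [this]
      have hspec := hex.choose_spec
      have heq : hex.choose = q :=
        hinj (Finset.mem_coe.mpr hspec.1) (Finset.mem_coe.mpr hq) hspec.2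
      rw [heq]
    have hset : (Finset.univ.filter fun f : Fin n × Fin n → Bool =>
          ∀ a b : Fin k, a < b → auxROf f (σ a) (σ b))
        = Finset.univ.filter (fun f : Fin n × Fin n → Bool => ∀ p ∈ P, f p = g p) := by
      apply Finset.filter_congr
      intro f _
      constructor
      · intro hf p hp
        obtain ⟨q, hq, rfl⟩ := Finset.mem_image.mp hp
        have hq' : q.1 < q.2 := by
          rw [hQdef, Finset.mem_filter] at hq
          exact hq.2
        rw [hg q hq]
        exact (hkey f q (ne_of_lt hq')).mp (hf _ _ hq')
      · intro hf a b hab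
        have hq : (a, b) ∈ Q := by
          rw [hQdef, Finset.mem_filter]
          exact ⟨Finset.mem_univ _, hab⟩
        refine (hkey f (a, b) (ne_of_lt hab)).mpr ?_
        rw [← hg _ hq]
        exact hf _ (Finset.mem_image_of_mem c hq)
    rw [hset, ← Fintype.card_subtype, aux_card_agree P g, hPcard,
      Fintype.card_prod, Fintype.card_fin]
  -- union bound
  set Bad : Finset (Fin n × Fin n → Bool) := Finset.univ.filter
    (fun f => ∃ σ : Fin k ↪ Fin n, ∀ a b : Fin k, a < b → auxROf f (σ a) (σ b)) with hBaddef
  have hsub : Bad ⊆ Finset.univ.biUnion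
      (fun σ : Fin k ↪ Fin n => Finset.univ.filter fun f : Fin n × Fin n → Bool =>
        ∀ a b : Fin k, a < b → auxROf f (σ a) (σ b)) := by
    intro f hf
    rw [hBaddef, Finset.mem_filter] at hf
    obtain ⟨σ, hσf⟩ := hf.2
    exact Finset.mem_biUnion.mpr ⟨σ, Finset.mem_univ _,
      Finset.mem_filter.mpr ⟨Finset.mem_univ _, hσf⟩⟩
  have hBad : Bad.card ≤ (Fintype.card (Fin k ↪ Fin n)) * 2 ^ (n * n - K) := by
    calc Bad.card ≤ _ := Finset.card_le_card hsub
      _ ≤ ∑ σ : Fin k ↪ Fin n, (Finset.univ.filter fun f : Fin n × Fin n → Bool =>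
            ∀ a b : Fin k, a < b → auxROf f (σ a) (σ b)).card := Finset.card_biUnion_le
      _ = (Fintype.card (Fin k ↪ Fin n)) * 2 ^ (n * n - K) := by
          rw [Finset.sum_congr rfl (fun σ _ => hσcount σ), Finset.sum_const,
            Finset.card_univ, smul_eq_mul]
  have hE : Fintype.card (Fin k ↪ Fin n) = n.descFactorial k := by
    rw [Fintype.card_embedding_eq, Fintype.card_fin, Fintype.card_fin]
  have hlt : Bad.card < Fintype.card (Fin n × Fin n → Bool) := by
    rcases le_or_gt k n with hkn | hkn
    · have hElt : Fintype.card (Fin k ↪ Fin n) < 2 ^ K := by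
        rw [hE]; exact lt_of_lt_of_le hdesc hpow
      have hKn : K ≤ n * n := by
        have h1 : K ≤ k * (k - 1) := Nat.div_le_self _ _
        have h2 : k * (k - 1) ≤ n * n := Nat.mul_le_mul hkn (le_trans (Nat.sub_le _ _) hkn)
        omega
      calc Bad.card ≤ _ := hBad
        _ < 2 ^ K * 2 ^ (n * n - K) :=
            mul_lt_mul_of_pos_right hElt (Nat.pow_pos (by omega))
        _ = 2 ^ (n * n) := by rw [← pow_add, Nat.add_sub_cancel' hKn]
        _ = Fintype.card (Fin n × Fin n → Bool) := hcardF.symm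
    · have hE0 : Fintype.card (Fin k ↪ Fin n) = 0 := by
        rw [hE]
        exact Nat.descFactorial_eq_zero_iff_lt.mpr hkn
      have : Bad.card ≤ 0 := by
        calc Bad.card ≤ _ := hBad
          _ = 0 := by rw [hE0]; ring
      rw [hcardF]
      have : Bad.card = 0 := by omega
      rw [this]
      exact Nat.pow_pos (by omega)
  obtain ⟨f, hfgood⟩ : ∃ f : Fin n × Fin n → Bool,
      ¬ ∃ σ : Fin k ↪ Fin n, ∀ a b : Fin k, a < b → auxROf f (σ a) (σ b) := by
    by_contra hcon
    push_neg at hcon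
    have hsubuniv : (Finset.univ : Finset (Fin n × Fin n → Bool)) ⊆ Bad := by
      intro f _
      rw [hBaddef, Finset.mem_filter]
      exact ⟨Finset.mem_univ _, hcon f⟩
    have := Finset.card_le_card hsubuniv
    rw [Finset.card_univ] at this
    omega
  refine ⟨auxROf f, auxROf_tournament f, ?_⟩
  intro S hS hA
  obtain ⟨σ, hmem, harcs⟩ := aux_tsort (auxROf_tournament f) S hS hA
  exact hfgood ⟨σ, harcs⟩

lemma aux_part2 (n : ℕ) (hn : 2 ≤ n) :
    ∃ r : Fin n → Fin n → Prop, IsTournament r ∧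
      (n : ℝ) / (2 * Real.logb 2 n + 1) ≤ (dichromaticNumber r : ℝ) := by
  classical
  set L := Real.logb 2 n with hLdef
  have hn0 : (0 : ℝ) < n := by exact_mod_cast (by omega : 0 < n)
  have hL : 1 ≤ L := by
    rw [hLdef, Real.le_logb_iff_rpow_le one_lt_two hn0, Real.rpow_one]
    exact_mod_cast hn
  set k : ℕ := ⌈2 * L⌉₊ + 1 with hkdef
  have hceil1 : 1 ≤ ⌈2 * L⌉₊ := by
    have : (0 : ℝ) < 2 * L := by linarith
    exact Nat.ceil_pos.mpr this
  have hk2 : 2 ≤ k := by omega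
  have hk1r : ((k : ℝ) - 1) = (⌈2 * L⌉₊ : ℝ) := by
    rw [hkdef]; push_cast; ring
  have hnk : (n : ℝ) ≤ (2 : ℝ) ^ (((k : ℝ) - 1) / 2) := by
    have h2 : L ≤ ((k : ℝ) - 1) / 2 := by
      rw [hk1r]
      have := Nat.le_ceil (2 * L)
      linarith
    calc (n : ℝ) = (2 : ℝ) ^ L :=
          (Real.rpow_logb (by norm_num) (by norm_num) hn0).symm
      _ ≤ (2 : ℝ) ^ (((k : ℝ) - 1) / 2) :=
          Real.rpow_le_rpow_of_exponent_le one_le_two h2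
  obtain ⟨r, hrT, hrS⟩ := aux_exists_tournament n k hn hk2 hnk
  refine ⟨r, hrT, ?_⟩
  -- the set defining the dichromatic number is nonempty
  have hnonempty : {m | ∃ c : Fin n → Fin m, ∀ j : Fin m, AcyclicOn r {x | c x = j}}.Nonempty := by
    refine ⟨n, id, fun j => ?_⟩
    have hstep : ∀ a b : Fin n,
        ¬ (a ∈ {y : Fin n | id y = j} ∧ b ∈ {y : Fin n | id y = j} ∧ r a b) := by
      rintro a b ⟨ha, hb, hab⟩
      simp only [Set.mem_setOf_eq, id_eq] at ha hb
      subst ha; subst hb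
      exact hrT.1 _ hab
    intro x hx
    cases hx with
    | single h => exact hstep _ _ h
    | tail _ h => exact hstep _ _ h
  set d := dichromaticNumber r with hddef
  obtain ⟨c, hc⟩ : ∃ c : Fin n → Fin d,
      ∀ j : Fin d, AcyclicOn r {x | c x = j} := Nat.sInf_mem hnonempty
  have hfib : ∀ m : Fin d, (Finset.univ.filter fun x : Fin n => c x = m).card ≤ k - 1 := by
    intro m
    by_contra hge
    push_neg at hge
    obtain ⟨T, hTsub, hTcard⟩ :=
      Finset.exists_subset_card_eq (s := Finset.univ.filter fun x : Fin n => c x = m) (n := k) (by omega)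
    refine hrS T hTcard ?_
    refine aux_acyclicOn_mono ?_ (hc m)
    intro x hx
    simp only [Set.mem_setOf_eq]
    exact (Finset.mem_filter.mp (hTsub (Finset.mem_coe.mp hx))).2
  have hcount : n ≤ d * (k - 1) := by
    have h1 : (Finset.univ : Finset (Fin n)).card
        = ∑ m : Fin d, (Finset.univ.filter fun x : Fin n => c x = m).card :=
      Finset.card_eq_sum_card_fiberwise (fun x _ => Finset.mem_univ (c x))
    rw [Finset.card_univ, Fintype.card_fin] at h1
    calc n = ∑ m : Fin d, (Finset.univ.filter fun x : Fin n => c x = m).card := h1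
      _ ≤ ∑ _m : Fin d, (k - 1) := Finset.sum_le_sum fun m _ => hfib m
      _ = d * (k - 1) := by
          rw [Finset.sum_const, Finset.card_univ, Fintype.card_fin, smul_eq_mul]
  have hk1ceil : ((k - 1 : ℕ) : ℝ) ≤ 2 * L + 1 := by
    have heq : ((k - 1 : ℕ) : ℝ) = (⌈2 * L⌉₊ : ℝ) := by
      rw [hkdef]; push_cast [Nat.add_sub_cancel]; ring
    rw [heq]
    have := Nat.ceil_lt_add_one (show (0 : ℝ) ≤ 2 * L by linarith)
    linarith
  have hcountr : (n : ℝ) ≤ (d : ℝ) * (2 * L + 1) := by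
    have h1 : (n : ℝ) ≤ (d : ℝ) * ((k - 1 : ℕ) : ℝ) := by exact_mod_cast hcount
    calc (n : ℝ) ≤ (d : ℝ) * ((k - 1 : ℕ) : ℝ) := h1
      _ ≤ (d : ℝ) * (2 * L + 1) :=
          mul_le_mul_of_nonneg_left hk1ceil (Nat.cast_nonneg d)
  have hpos : (0 : ℝ) < 2 * L + 1 := by linarith
  rw [div_le_iff₀ hpos]
  exact hcountr

end AuxTDLB

/-- if `n ≤ 2^((k-1)/2)` (with `n, k ≥ 2`) then there is a tournament on
`n` vertices with no transitive subtournament on `k` vertices; consequently, for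
sufficiently large `n` there is a tournament on `n` vertices with dichromatic number at
least `n / (2·log₂ n + 1)`. -/
theorem tournament_dichromatic_lower_bound :
    (∀ n k : ℕ, 2 ≤ n → 2 ≤ k → (n : ℝ) ≤ (2 : ℝ) ^ (((k : ℝ) - 1) / 2) →
      ∃ r : Fin n → Fin n → Prop, IsTournament r ∧
        ∀ S : Finset (Fin n), S.card = k → ¬ AcyclicOn r ↑S) ∧
    (∃ n₀ : ℕ, ∀ n : ℕ, n₀ ≤ n →
      ∃ r : Fin n → Fin n → Prop, IsTournament r ∧
        (n : ℝ) / (2 * Real.logb 2 n + 1) ≤ (dichromaticNumber r : ℝ)) := by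
  constructor
  · intro n k hn hk h
    exact aux_exists_tournament n k hn hk h
  · exact ⟨2, fun n hn => aux_part2 n hn⟩
end
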